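/- arXiv:2307.12680 — 10 statements merged into one kernel-verified Lean document; each statement's English description precedes it below -/
import Mathlib

section
/- Let G be a finite Abelian p-group with basis {Q_1,...,Q_N}. If an element K of G is primitive with respect to this basis (i.e., when K = q_1 Q_1 + ... + q_N Q_N, p does not divide q_i for some i), then K is primitive with respect to any other basis of G. -/
/-- A basis of a finite abelian group: every element has a unique representation
`∑ i, b i • Q i` with `0 ≤ b i < |Q i|`. -/
def IsBasis {G : Type*} [AddCommGroup G] {ι : Type*} [Fintype ι] (Q : ι → G) : Prop :=
  ∀ g : G, ∃! b : ι → ℕ,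
    (∀ i, b i < addOrderOf (Q i)) ∧ g = ∑ i, b i • Q i

/-- `K` is primitive w.r.t. the basis `Q` if, writing `K = ∑ i, q i • Q i` with coefficients
in canonical range, `p` does not divide some coefficient `q i`. -/
def IsPrimitive (p : ℕ) {G : Type*} [AddCommGroup G] {ι : Type*} [Fintype ι]
    (Q : ι → G) (K : G) : Prop :=
  ∃ q : ι → ℕ, (∀ i, q i < addOrderOf (Q i)) ∧ K = ∑ i, q i • Q i ∧ ∃ i, ¬ p ∣ q i

/-- The valuation `ν_p` of `K` relative to the basis `Q`: the largest `r` such that `p ^ r`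
divides all the (canonical) coefficients of `K`, with `ν_p 0 = ∞`. -/
noncomputable def nuP (p : ℕ) {G : Type*} [AddCommGroup G] {ι : Type*} [Fintype ι]
    (Q : ι → G) (K : G) : ℕ∞ :=
  sSup (((↑) : ℕ → ℕ∞) '' {r : ℕ | ∀ q : ι → ℕ,
    ((∀ i, q i < addOrderOf (Q i)) ∧ K = ∑ i, q i • Q i) → ∀ i, p ^ r ∣ q i})

/-- Primitivity is independent of the basis. -/
theorem primitive_basis_independent {G : Type*} [AddCommGroup G] [Fintype G]
    {p : ℕ} (hp : p.Prime) (hG : ∀ g : G, ∃ k : ℕ, p ^ k • g = 0)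
    {N : ℕ} (Q P : Fin N → G) (hQ : IsBasis Q) (hP : IsBasis P) (K : G)
    (hK : IsPrimitive p Q K) : IsPrimitive p P K := by
  obtain ⟨q', ⟨hq'lt, hq'eq⟩, -⟩ := hP K
  refine ⟨q', hq'lt, hq'eq, ?_⟩
  by_contra h
  push_neg at h
  -- h : ∀ i, p ∣ q' i, so K = p • K'
  set K' : G := ∑ i, (q' i / p) • P i with hK'
  have hKp : K = p • K' := by
    rw [hq'eq, hK', Finset.smul_sum]
    refine Finset.sum_congr rfl fun i _ => ?_
    rw [← mul_nsmul', Nat.mul_div_cancel' (h i)]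
  -- canonical Q-representation of K'
  obtain ⟨c, ⟨hclt, hceq⟩, -⟩ := hQ K'
  set r : Fin N → ℕ := fun i => (p * c i) % addOrderOf (Q i) with hr
  have hrlt : ∀ i, r i < addOrderOf (Q i) := fun i =>
    Nat.mod_lt _ (addOrderOf_pos (Q i))
  have hKeq : K = ∑ i, r i • Q i := by
    rw [hKp, hceq, Finset.smul_sum]
    refine Finset.sum_congr rfl fun i _ => ?_
    rw [hr]
    simp only [mod_addOrderOf_nsmul]
    rw [← mul_nsmul']
  have hrdvd : ∀ i, p ∣ r i := by
    intro i
    obtain ⟨k, hk⟩ := hG (Q i)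
    have hdvd : addOrderOf (Q i) ∣ p ^ k := addOrderOf_dvd_of_nsmul_eq_zero hk
    obtain ⟨m, -, hm⟩ := (Nat.dvd_prime_pow hp).mp hdvd
    rcases Nat.eq_zero_or_pos m with hm0 | hm1
    · have : r i < 1 := by
        have := hrlt i
        rwa [hm, hm0, pow_zero] at this
      simp [Nat.lt_one_iff.mp this]
    · have hpord : p ∣ addOrderOf (Q i) := hm ▸ dvd_pow_self p hm1.ne'
      rw [hr]
      exact (Nat.dvd_mod_iff hpord).mpr ⟨c i, rfl⟩
  -- uniqueness of representation wrt Q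
  obtain ⟨q, hqlt, hqeq, i, hi⟩ := hK
  obtain ⟨b, -, huniq⟩ := hQ K
  have h1 := huniq q ⟨hqlt, hqeq⟩
  have h2 := huniq r ⟨hrlt, hKeq⟩
  have : q = r := h1.trans h2.symm
  exact hi (this ▸ hrdvd i)
end

section
/- Let G be a finite Abelian p-group with basis {Q_1,...,Q_N}. Define nu_p(K) for a nonzero K = q_1 Q_1 + ... + q_N Q_N as the largest nonnegative integer r such that p^r divides every q_i. Then nu_p is well defined: if K = q_1 Q_1 + ... + q_N Q_N = m_1 P_1 + ... + m_N P_N for two bases {Q_i} and {P_i}, the value of nu_p computed from the q_i equals the value computed from the m_i. -/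
lemma smul_eq_mod_smul' {G : Type*} [AddCommGroup G] (a : ℕ) (x : G) :
    a • x = (a % addOrderOf x) • x := by
  conv_lhs => rw [← Nat.mod_add_div a (addOrderOf x)]
  rw [add_smul, mul_comm, mul_smul, addOrderOf_nsmul_eq_zero, smul_zero, add_zero]

lemma dvd_coeffs_iff {G : Type*} [AddCommGroup G] [Fintype G]
    {p : ℕ} (hp : p.Prime) (hG : ∀ g : G, ∃ k : ℕ, p ^ k • g = 0)
    {N : ℕ} (Q : Fin N → G) (hQ : IsBasis Q) (K : G) (q : Fin N → ℕ)
    (hq1 : ∀ i, q i < addOrderOf (Q i)) (hq2 : K = ∑ i, q i • Q i) (r : ℕ) :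
    (∀ i, p ^ r ∣ q i) ↔ ∃ g : G, K = p ^ r • g := by
  constructor
  · intro h
    refine ⟨∑ i, (q i / p ^ r) • Q i, ?_⟩
    rw [hq2, Finset.smul_sum]
    refine Finset.sum_congr rfl fun i _ => ?_
    rw [smul_smul, Nat.mul_div_cancel' (h i)]
  · rintro ⟨g, hg⟩
    obtain ⟨b, ⟨hb1, hb2⟩, -⟩ := hQ g
    set c : Fin N → ℕ := fun i => (p ^ r * b i) % addOrderOf (Q i) with hc
    have hc1 : ∀ i, c i < addOrderOf (Q i) := fun i =>
      Nat.mod_lt _ (addOrderOf_pos (Q i))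
    have hc2 : K = ∑ i, c i • Q i := by
      rw [hg, hb2, Finset.smul_sum]
      refine Finset.sum_congr rfl fun i _ => ?_
      rw [smul_smul, smul_eq_mod_smul' (p ^ r * b i) (Q i)]
    have hqc : q = c := (hQ K).unique ⟨hq1, hq2⟩ ⟨hc1, hc2⟩
    intro i
    rw [hqc]
    obtain ⟨k, hk⟩ := hG (Q i)
    obtain ⟨s, -, hs⟩ := (Nat.dvd_prime_pow hp).mp (addOrderOf_dvd_of_nsmul_eq_zero hk)
    rcases le_or_gt s r with hle | hlt
    · have : addOrderOf (Q i) ∣ p ^ r * b i := by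
        rw [hs]; exact Dvd.dvd.mul_right (pow_dvd_pow p hle) _
      simp only [hc, Nat.mod_eq_zero_of_dvd this, dvd_zero]
    · have hdvd : p ^ r ∣ addOrderOf (Q i) := by
        rw [hs]; exact pow_dvd_pow p hlt.le
      exact (Nat.dvd_mod_iff hdvd).mpr (Dvd.dvd.mul_right dvd_rfl _)

/-- `ν_p` is well defined: if `K ≠ 0` is represented by coefficients `q` w.r.t. basis `Q`
and by `m` w.r.t. basis `P` (both in canonical range), then for every `r`, `p ^ r` divides all
the `q i` iff it divides all the `m i`; hence the largest such `r` is the same. -/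
theorem nuP_well_defined {G : Type*} [AddCommGroup G] [Fintype G]
    {p : ℕ} (hp : p.Prime) (hG : ∀ g : G, ∃ k : ℕ, p ^ k • g = 0)
    {N : ℕ} (Q P : Fin N → G) (hQ : IsBasis Q) (hP : IsBasis P)
    (K : G) (hK : K ≠ 0) (q m : Fin N → ℕ)
    (hq : (∀ i, q i < addOrderOf (Q i)) ∧ K = ∑ i, q i • Q i)
    (hm : (∀ i, m i < addOrderOf (P i)) ∧ K = ∑ i, m i • P i) :
    ∀ r : ℕ, (∀ i, p ^ r ∣ q i) ↔ (∀ i, p ^ r ∣ m i) := by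
  intro r
  rw [dvd_coeffs_iff hp hG Q hQ K q hq.1 hq.2 r,
      dvd_coeffs_iff hp hG P hP K m hm.1 hm.2 r]
end

section
/- Let G be a finite Abelian p-group with sorted basis {Q_1,...,Q_N} (orders |Q_i| = p^{e_i} with e_1 <= ... <= e_N). Let Q = q_1 Q_1 + ... + q_N Q_N be primitive and let k be the largest index with p not dividing q_k. If the order of Q equals p^{e_k}, then {Q_1,...,Q_{k-1}, Q, Q_{k+1},...,Q_N} is a basis of G; in particular Q extends to a basis of G. -/
/-- The canonical evaluation map from bounded coefficient tuples. -/
private def Fmap {G : Type*} [AddCommGroup G] {ι : Type*} [Fintype ι] (R : ι → G) :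
    (∀ i, Fin (addOrderOf (R i))) → G :=
  fun c => ∑ i, (c i : ℕ) • R i

private theorem isBasis_iff_bijective {G : Type*} [AddCommGroup G] {ι : Type*}
    [Fintype ι] (R : ι → G) :
    IsBasis R ↔ Function.Bijective (Fmap R) := by
  constructor
  · intro hB
    constructor
    · intro c₁ c₂ hcc
      obtain ⟨b, hb, hun⟩ := hB (Fmap R c₁)
      have h1 : (fun i => (c₁ i : ℕ)) = b := hun _ ⟨fun i => (c₁ i).2, rfl⟩
      have h2 : (fun i => (c₂ i : ℕ)) = b := hun _ ⟨fun i => (c₂ i).2, hcc⟩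
      funext i
      exact Fin.ext (by rw [← h2] at h1; exact congrFun h1 i)
    · intro g
      obtain ⟨b, ⟨hblt, hbeq⟩, _⟩ := hB g
      exact ⟨fun i => ⟨b i, hblt i⟩, hbeq.symm⟩
  · intro hF g
    obtain ⟨c, hc⟩ := hF.surjective g
    refine ⟨fun i => (c i : ℕ), ⟨fun i => (c i).2, hc.symm⟩, ?_⟩
    rintro b ⟨hblt, hbeq⟩
    have heq : Fmap R (fun i => ⟨b i, hblt i⟩) = Fmap R c := by
      rw [hc]; exact hbeq.symm
    have := hF.injective heq
    funext i
    exact congrArg Fin.val (congrFun this i)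

/-- Sufficient condition for basis extension: if `Q' = ∑ q i • Q i` is primitive, `k` is the
largest index with `p ∤ q k`, and `|Q'| = p ^ e k = |Q k|`, then replacing `Q k` by `Q'`
again gives a basis of `G`; in particular `Q'` extends to a basis of `G`. -/
theorem basis_extension_sufficient {G : Type*} [AddCommGroup G] [Fintype G]
    {p : ℕ} (hp : p.Prime) (hG : ∀ g : G, ∃ k : ℕ, p ^ k • g = 0)
    {N : ℕ} (Q : Fin N → G) (hQ : IsBasis Q)
    (e : Fin N → ℕ) (he : Monotone e) (hord : ∀ i, addOrderOf (Q i) = p ^ e i)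
    (Q' : G) (q : Fin N → ℕ)
    (hqlt : ∀ i, q i < addOrderOf (Q i)) (hrep : Q' = ∑ i, q i • Q i)
    (k : Fin N) (hk : ¬ p ∣ q k) (hkmax : ∀ i, k < i → p ∣ q i)
    (hordQ' : addOrderOf Q' = p ^ e k) :
    IsBasis (Function.update Q k Q') ∧ ∃ B : Fin N → G, IsBasis B ∧ ∃ i, B i = Q' := by
  classical
  set R := Function.update Q k Q' with hR
  have hRk : R k = Q' := Function.update_self k Q' Q
  have hRne : ∀ i, i ≠ k → R i = Q i := fun i hi => Function.update_of_ne hi Q' Q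
  have hordR : ∀ i, addOrderOf (R i) = addOrderOf (Q i) := by
    intro i
    by_cases hi : i = k
    · subst hi; rw [hRk, hordQ', hord]
    · rw [hRne i hi]
  -- every Q i lies in the ℤ-span of R
  have hmem' : ∀ i, i ≠ k → Q i ∈ Submodule.span ℤ (Set.range R) := by
    intro i hi
    rw [← hRne i hi]
    exact Submodule.subset_span ⟨i, rfl⟩
  have hQ'mem : Q' ∈ Submodule.span ℤ (Set.range R) := by
    rw [← hRk]; exact Submodule.subset_span ⟨k, rfl⟩
  have hmem : ∀ i, Q i ∈ Submodule.span ℤ (Set.range R) := by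
    intro i
    by_cases hi : i = k
    · rw [hi]
      -- q k is invertible mod p ^ e k
      have hcop : Nat.Coprime (q k) (p ^ e k) :=
        Nat.Coprime.pow_right _ ((hp.coprime_iff_not_dvd.mpr hk).symm)
      obtain ⟨u, v, huv⟩ := (Nat.isCoprime_iff_coprime.mpr hcop : IsCoprime ((q k : ℤ)) _)
      have hzero : ((p ^ e k : ℕ)) • Q k = 0 := by
        rw [← hord k]; exact addOrderOf_nsmul_eq_zero (Q k)
      have hsub : (q k) • Q k = Q' - ∑ i ∈ Finset.univ.erase k, q i • Q i := by
        refine eq_sub_of_add_eq ?_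
        rw [hrep]
        exact Finset.add_sum_erase Finset.univ (fun i => q i • Q i) (Finset.mem_univ k)
      have hQk : Q k = u • (Q' - ∑ i ∈ Finset.univ.erase k, q i • Q i) := by
        calc Q k = (1 : ℤ) • Q k := (one_zsmul _).symm
          _ = (u * (q k : ℤ) + v * ((p ^ e k : ℕ) : ℤ)) • Q k := by
              rw [huv]
          _ = u • ((q k : ℤ) • Q k) + v • (((p ^ e k : ℕ) : ℤ)) • Q k := by
              rw [add_zsmul, mul_zsmul, mul_zsmul]
          _ = u • ((q k) • Q k) := by
              rw [natCast_zsmul, natCast_zsmul, hzero, smul_zero, add_zero]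
          _ = u • (Q' - ∑ i ∈ Finset.univ.erase k, q i • Q i) := by rw [hsub]
      rw [hQk]
      refine Submodule.smul_mem _ u (Submodule.sub_mem _ hQ'mem (Submodule.sum_mem _ ?_))
      intro i hi
      exact nsmul_mem (hmem' i (Finset.ne_of_mem_erase hi)) _
    · exact hmem' i hi
  -- surjectivity of the evaluation map for R
  have hsurj : Function.Surjective (Fmap R) := by
    intro g
    obtain ⟨b, ⟨_, hbeq⟩, _⟩ := hQ g
    have hg : g ∈ Submodule.span ℤ (Set.range R) := by
      rw [hbeq]; exact Submodule.sum_mem _ fun i _ => nsmul_mem (hmem i) _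
    obtain ⟨c, hc⟩ := (Submodule.mem_span_range_iff_exists_fun ℤ).mp hg
    have key : ∀ i, ∃ m : ℕ, m < addOrderOf (R i) ∧ (m : ℕ) • R i = c i • R i := by
      intro i
      have hpos : 0 < addOrderOf (R i) := addOrderOf_pos (R i)
      have h1 : 0 ≤ c i % (addOrderOf (R i) : ℤ) :=
        Int.emod_nonneg _ (by exact_mod_cast hpos.ne')
      have h2 : c i % (addOrderOf (R i) : ℤ) < (addOrderOf (R i) : ℤ) :=
        Int.emod_lt_of_pos _ (by exact_mod_cast hpos)
      refine ⟨(c i % (addOrderOf (R i) : ℤ)).toNat, by omega, ?_⟩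
      rw [← natCast_zsmul, Int.toNat_of_nonneg h1, mod_addOrderOf_zsmul]
    choose m hmlt hmeq using key
    refine ⟨fun i => ⟨m i, hmlt i⟩, ?_⟩
    show (∑ i, (m i) • R i) = g
    rw [← hc]
    exact Finset.sum_congr rfl fun i _ => hmeq i
  -- cardinality argument
  have hbijQ := (isBasis_iff_bijective Q).mp hQ
  have hcardQ : Fintype.card (∀ i, Fin (addOrderOf (Q i))) = Fintype.card G :=
    Fintype.card_of_bijective hbijQ
  have hcardR : Fintype.card (∀ i, Fin (addOrderOf (R i))) = Fintype.card G := by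
    rw [← hcardQ, Fintype.card_pi, Fintype.card_pi]
    exact Finset.prod_congr rfl fun i _ => by rw [Fintype.card_fin, Fintype.card_fin, hordR]
  have hbijR : Function.Bijective (Fmap R) :=
    (Fintype.bijective_iff_surjective_and_card _).mpr ⟨hsurj, hcardR⟩
  have hBR : IsBasis R := (isBasis_iff_bijective R).mpr hbijR
  exact ⟨hBR, R, hBR, k, hRk⟩
end

section
/- In the group G = Z/2 x Z/4 x Z/8, the element Q = (1,0,2) is primitive (its first coordinate is odd) but Q is not a member of any basis of G. -/

lemma ordQ : addOrderOf ((1,0,2) : ZMod 2 × ZMod 4 × ZMod 8) = 4 := by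
  rw [addOrderOf_eq_iff (by norm_num)]
  exact ⟨by decide, by intro m hm hm'; interval_cases m <;> decide⟩

lemma ordE1 : addOrderOf ((1,0,0) : ZMod 2 × ZMod 4 × ZMod 8) = 2 := by
  rw [addOrderOf_eq_iff (by norm_num)]
  exact ⟨by decide, by intro m hm hm'; interval_cases m <;> decide⟩

lemma ordE2 : addOrderOf ((0,1,0) : ZMod 2 × ZMod 4 × ZMod 8) = 4 := by
  rw [addOrderOf_eq_iff (by norm_num)]
  exact ⟨by decide, by intro m hm hm'; interval_cases m <;> decide⟩

lemma ordE3 : addOrderOf ((0,0,1) : ZMod 2 × ZMod 4 × ZMod 8) = 8 := by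
  rw [addOrderOf_eq_iff (by norm_num)]
  exact ⟨by decide, by intro m hm hm'; interval_cases m <;> decide⟩

/-- In `ℤ/2 × ℤ/4 × ℤ/8`, the element `(1,0,2)` is primitive (its first coordinate is odd),
yet it is not a member of any basis. -/
theorem primitive_not_in_basis :
    IsPrimitive 2 (![(1,0,0),(0,1,0),(0,0,1)] : Fin 3 → ZMod 2 × ZMod 4 × ZMod 8)
      ((1,0,2) : ZMod 2 × ZMod 4 × ZMod 8) ∧
    ¬ ∃ B : Fin 3 → ZMod 2 × ZMod 4 × ZMod 8,
        IsBasis B ∧ ∃ i, B i = ((1,0,2) : ZMod 2 × ZMod 4 × ZMod 8) := by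
  constructor
  · refine ⟨![1,0,2], ?_, ?_, ⟨0, by decide⟩⟩
    · intro i
      fin_cases i
      · show (1:ℕ) < addOrderOf ((1,0,0) : ZMod 2 × ZMod 4 × ZMod 8)
        rw [ordE1]; norm_num
      · show (0:ℕ) < addOrderOf ((0,1,0) : ZMod 2 × ZMod 4 × ZMod 8)
        rw [ordE2]; norm_num
      · show (2:ℕ) < addOrderOf ((0,0,1) : ZMod 2 × ZMod 4 × ZMod 8)
        rw [ordE3]; norm_num
    · rw [Fin.sum_univ_three]
      decide
  · rintro ⟨B, hB, i₀, hi₀⟩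
    have hpos : ∀ i, 0 < addOrderOf (B i) := fun i => addOrderOf_pos (B i)
    obtain ⟨c, ⟨hc, hcsum⟩, -⟩ := hB ((0,0,1) : ZMod 2 × ZMod 4 × ZMod 8)
    have hni₀ : addOrderOf (B i₀) = 4 := by rw [hi₀]; exact ordQ
    set Q : ZMod 2 × ZMod 4 × ZMod 8 := (1,0,2)
    have huniq := (hB ((2:ℕ) • Q)).unique (y₁ := fun i => if i = i₀ then 2 else 0)
      (y₂ := fun i => (4 * c i) % addOrderOf (B i)) ?_ ?_
    · have := congrFun huniq i₀
      simp only [eq_self_iff_true, if_true, hni₀] at this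
      have h0 : (4 * c i₀) % 4 = 0 := Nat.mul_mod_right 4 _
      omega
    · constructor
      · intro i
        by_cases h : i = i₀ <;> simp [h, hni₀, hpos i]
      · rw [Finset.sum_eq_single i₀ (fun b _ hb => by simp [hb]) (by simp)]
        simp [hi₀]
    · constructor
      · intro i; exact Nat.mod_lt _ (hpos i)
      · have h1 : (2:ℕ) • Q = (4:ℕ) • ((0,0,1) : ZMod 2 × ZMod 4 × ZMod 8) := by decide
        rw [h1, hcsum, Finset.smul_sum]
        refine Finset.sum_congr rfl fun i _ => ?_
        rw [mod_addOrderOf_nsmul, smul_smul]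
end

section
/- Let G be a finite Abelian p-group with sorted basis {Q_1,...,Q_N}, and suppose {P_1,...,P_N} is another sorted basis. Let K_1 = q_1 Q_1 + ... + q_N Q_N and K_2 = m_1 P_1 + ... + m_N P_N be primitive elements with |K_1| = p^e. Let k be the largest index with p not dividing q_k and l the largest index with p not dividing m_l. If nu_p(p^j K_1) = nu_p(p^j K_2) for all 0 <= j <= e, then |Q_k| = |P_l|. -/
section ShuffleAux

variable {G : Type*} [AddCommGroup G] [Fintype G] {ι : Type*} [Fintype ι]

lemma IsBasis.rep_eq {Q : ι → G} (hQ : IsBasis Q) {K : G} {b c : ι → ℕ}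
    (hb : (∀ i, b i < addOrderOf (Q i)) ∧ K = ∑ i, b i • Q i)
    (hc : (∀ i, c i < addOrderOf (Q i)) ∧ K = ∑ i, c i • Q i) : b = c := by
  obtain ⟨u, _, hu⟩ := hQ K
  rw [hu b hb, hu c hc]

lemma shuffle_rep_smul {Q : ι → G} {K : G} {q : ι → ℕ}
    (hqlt : ∀ i, q i < addOrderOf (Q i)) (hK : K = ∑ i, q i • Q i) (n : ℕ) :
    (∀ i, (n * q i) % addOrderOf (Q i) < addOrderOf (Q i)) ∧
      n • K = ∑ i, ((n * q i) % addOrderOf (Q i)) • Q i := by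
  refine ⟨fun i => Nat.mod_lt _ (addOrderOf_pos (Q i)), ?_⟩
  rw [hK, Finset.smul_sum]
  refine Finset.sum_congr rfl fun i _ => ?_
  rw [mod_addOrderOf_nsmul, smul_smul]

lemma shuffle_ord_pow {p : ℕ} (hp : p.Prime) (hG : ∀ g : G, ∃ k : ℕ, p ^ k • g = 0)
    (g : G) : ∃ a : ℕ, addOrderOf g = p ^ a := by
  obtain ⟨k, hk⟩ := hG g
  obtain ⟨a, -, ha⟩ := (Nat.dvd_prime_pow hp).mp (addOrderOf_dvd_of_nsmul_eq_zero hk)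
  exact ⟨a, ha⟩

lemma shuffle_mod_pow_dvd {p r a n : ℕ} (hr : p ^ r ∣ n) : p ^ r ∣ n % p ^ a := by
  rcases le_or_gt r a with h | h
  · exact (Nat.dvd_mod_iff (pow_dvd_pow p h)).mpr hr
  · obtain ⟨t, rfl⟩ := dvd_trans (pow_dvd_pow p h.le) hr
    simp [Nat.mul_mod_right]

lemma shuffle_not_dvd_mod {p j a c : ℕ} (hp : p.Prime) (hja : j < a) (hc : ¬ p ∣ c) :
    ¬ p ^ (j + 1) ∣ (p ^ j * c) % p ^ a := by
  intro h
  rw [Nat.dvd_mod_iff (pow_dvd_pow p hja)] at h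
  rw [pow_succ] at h
  exact hc ((mul_dvd_mul_iff_left (pow_ne_zero j hp.pos.ne')).mp h)

lemma shuffle_nuP_ge {p : ℕ} {Q : ι → G} (hQ : IsBasis Q) {K : G} {c : ι → ℕ}
    (hclt : ∀ i, c i < addOrderOf (Q i)) (hKc : K = ∑ i, c i • Q i)
    {r : ℕ} (h : ∀ i, p ^ r ∣ c i) : (r : ℕ∞) ≤ nuP p Q K := by
  refine le_sSup ⟨r, fun b hb i => ?_, rfl⟩
  rw [hQ.rep_eq hb ⟨hclt, hKc⟩]
  exact h i

lemma shuffle_nuP_le {p : ℕ} {Q : ι → G} {K : G} {c : ι → ℕ}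
    (hclt : ∀ i, c i < addOrderOf (Q i)) (hKc : K = ∑ i, c i • Q i)
    {r : ℕ} (i : ι) (h : ¬ p ^ (r + 1) ∣ c i) : nuP p Q K ≤ (r : ℕ∞) := by
  refine sSup_le ?_
  rintro x ⟨s, hs, rfl⟩
  have hsc : p ^ s ∣ c i := hs c ⟨hclt, hKc⟩ i
  by_contra hlt
  push_neg at hlt
  have hrs : r + 1 ≤ s := by exact_mod_cast hlt
  exact h (dvd_trans (pow_dvd_pow p hrs) hsc)

lemma shuffle_nuP_basisfree {p : ℕ} (hp : p.Prime) (hG : ∀ g : G, ∃ k : ℕ, p ^ k • g = 0)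
    {Q : ι → G} (hQ : IsBasis Q) (K : G) :
    nuP p Q K = sSup (((↑) : ℕ → ℕ∞) '' {r : ℕ | ∃ H : G, K = p ^ r • H}) := by
  unfold nuP
  congr 1
  ext x
  simp only [Set.mem_image, Set.mem_setOf_eq]
  constructor
  · rintro ⟨r, hr, rfl⟩
    obtain ⟨c, ⟨hclt, hKc⟩, -⟩ := hQ K
    have hdvd : ∀ i, p ^ r ∣ c i := hr c ⟨hclt, hKc⟩
    refine ⟨r, ⟨∑ i, (c i / p ^ r) • Q i, ?_⟩, rfl⟩
    rw [hKc, Finset.smul_sum]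
    refine Finset.sum_congr rfl fun i _ => ?_
    rw [smul_smul, Nat.mul_div_cancel' (hdvd i)]
  · rintro ⟨r, ⟨H, hH⟩, rfl⟩
    refine ⟨r, fun b hb i => ?_, rfl⟩
    obtain ⟨h, ⟨hhlt, hHh⟩, -⟩ := hQ H
    have hrep := shuffle_rep_smul hhlt hHh (p ^ r)
    rw [hQ.rep_eq hb ⟨hrep.1, hH.trans hrep.2⟩]
    obtain ⟨a, ha⟩ := shuffle_ord_pow hp hG (Q i)
    show p ^ r ∣ p ^ r * h i % addOrderOf (Q i)
    rw [ha]
    exact shuffle_mod_pow_dvd (dvd_mul_right _ _)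

lemma shuffle_nuP_key {p : ℕ} (hp : p.Prime) (hG : ∀ g : G, ∃ k : ℕ, p ^ k • g = 0)
    {N : ℕ} {Q : Fin N → G} (hQ : IsBasis Q)
    (hQsorted : Monotone fun i => addOrderOf (Q i))
    {K : G} {q : Fin N → ℕ}
    (hqlt : ∀ i, q i < addOrderOf (Q i)) (hK : K = ∑ i, q i • Q i)
    {k : Fin N} (hk : ¬ p ∣ q k) (hkmax : ∀ i, k < i → p ∣ q i)
    {A : ℕ} (hA : addOrderOf (Q k) = p ^ A) (j : ℕ) :
    nuP p Q (p ^ j • K) = (j : ℕ∞) ↔ j < A := by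
  have hrep := shuffle_rep_smul hqlt hK (p ^ j)
  constructor
  · intro hnu
    by_contra hja
    push_neg at hja  -- A ≤ j
    have hge : ((j + 1 : ℕ) : ℕ∞) ≤ nuP p Q (p ^ j • K) := by
      refine shuffle_nuP_ge hQ hrep.1 hrep.2 fun i => ?_
      obtain ⟨a, ha⟩ := shuffle_ord_pow hp hG (Q i)
      rw [ha]
      rcases le_or_gt i k with hik | hik
      · -- order of Q i at most p ^ A ≤ p ^ j, coefficient is 0
        have hord : addOrderOf (Q i) ≤ addOrderOf (Q k) := hQsorted hik
        rw [ha, hA] at hord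
        have haA : a ≤ A := (Nat.pow_le_pow_iff_right hp.one_lt).mp hord
        obtain ⟨t, ht⟩ : p ^ a ∣ p ^ j * q i :=
          dvd_mul_of_dvd_left (pow_dvd_pow p (haA.trans hja)) _
        rw [ht]
        simp [Nat.mul_mod_right]
      · obtain ⟨t, ht⟩ := hkmax i hik
        refine shuffle_mod_pow_dvd ⟨t, ?_⟩
        rw [ht, pow_succ]
        ring
    rw [hnu] at hge
    exact absurd (by exact_mod_cast hge) (by omega)
  · intro hja
    refine le_antisymm ?_ ?_
    · refine shuffle_nuP_le hrep.1 hrep.2 k ?_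
      rw [hA]
      exact shuffle_not_dvd_mod hp hja hk
    · refine shuffle_nuP_ge hQ hrep.1 hrep.2 fun i => ?_
      obtain ⟨a, ha⟩ := shuffle_ord_pow hp hG (Q i)
      rw [ha]
      exact shuffle_mod_pow_dvd (dvd_mul_right _ _)

lemma shuffle_nuP_zero_ge {p : ℕ} {Q : ι → G} (hQ : IsBasis Q) (r : ℕ) :
    (r : ℕ∞) ≤ nuP p Q (0 : G) := by
  refine shuffle_nuP_ge hQ (c := fun _ => 0) (fun i => addOrderOf_pos (Q i)) (by simp)
    (fun i => dvd_zero _)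

end ShuffleAux
/-- If the primitive elements `K₁ = ∑ q i • Q i` and `K₂ = ∑ m i • P i` (w.r.t. sorted bases
`Q`, `P`) satisfy `ν_p (p^j • K₁) = ν_p (p^j • K₂)` for all `0 ≤ j ≤ e` where `|K₁| = p ^ e`,
and `k`, `l` are the largest indices with `p ∤ q k`, `p ∤ m l`, then `|Q k| = |P l|`. -/
theorem shuffle_theorem {G : Type*} [AddCommGroup G] [Fintype G]
    {p : ℕ} (hp : p.Prime) (hG : ∀ g : G, ∃ k : ℕ, p ^ k • g = 0)
    {N : ℕ} (Q P : Fin N → G) (hQ : IsBasis Q) (hP : IsBasis P)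
    (hQsorted : Monotone fun i => addOrderOf (Q i))
    (hPsorted : Monotone fun i => addOrderOf (P i))
    (K₁ K₂ : G) (q m : Fin N → ℕ)
    (hqlt : ∀ i, q i < addOrderOf (Q i)) (hK₁ : K₁ = ∑ i, q i • Q i)
    (hmlt : ∀ i, m i < addOrderOf (P i)) (hK₂ : K₂ = ∑ i, m i • P i)
    (e : ℕ) (hordK₁ : addOrderOf K₁ = p ^ e)
    (k : Fin N) (hk : ¬ p ∣ q k) (hkmax : ∀ i, k < i → p ∣ q i)
    (l : Fin N) (hl : ¬ p ∣ m l) (hlmax : ∀ i, l < i → p ∣ m i)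
    (hnu : ∀ j : ℕ, j ≤ e → nuP p Q (p ^ j • K₁) = nuP p Q (p ^ j • K₂)) :
    addOrderOf (Q k) = addOrderOf (P l) := by
  -- exponents of the orders of Q k and P l
  obtain ⟨A, hA⟩ := shuffle_ord_pow hp hG (Q k)
  obtain ⟨B, hB⟩ := shuffle_ord_pow hp hG (P l)
  have h1 : ∀ j : ℕ, nuP p Q (p ^ j • K₁) = (j : ℕ∞) ↔ j < A :=
    shuffle_nuP_key hp hG hQ hQsorted hqlt hK₁ hk hkmax hA
  have h2 : ∀ j : ℕ, nuP p P (p ^ j • K₂) = (j : ℕ∞) ↔ j < B :=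
    shuffle_nuP_key hp hG hP hPsorted hmlt hK₂ hl hlmax hB
  have h3 : ∀ K : G, nuP p Q K = nuP p P K := fun K => by
    rw [shuffle_nuP_basisfree hp hG hQ K, shuffle_nuP_basisfree hp hG hP K]
  -- A ≤ e
  have hK₁e : p ^ e • K₁ = 0 := by rw [← hordK₁]; exact addOrderOf_nsmul_eq_zero K₁
  have hAe : A ≤ e := by
    by_contra hAe
    push_neg at hAe
    have := (h1 e).mpr hAe
    rw [hK₁e] at this
    have hge := shuffle_nuP_zero_ge (p := p) hQ (e + 1)
    rw [this] at hge
    exact absurd (by exact_mod_cast hge) (by omega)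
  -- show A = B
  have hAB : A = B := by
    rcases lt_trichotomy A B with hlt | heq | hlt
    · exfalso
      have hQ2 : nuP p Q (p ^ A • K₂) = (A : ℕ∞) := by
        rw [h3]; exact (h2 A).mpr hlt
      have := (h1 A).mp ((hnu A hAe).trans hQ2)
      omega
    · exact heq
    · exfalso
      have hQ1 : nuP p Q (p ^ B • K₁) = (B : ℕ∞) := (h1 B).mpr hlt
      have hP2 : nuP p P (p ^ B • K₂) = (B : ℕ∞) := by
        rw [← h3]
        exact (hnu B (by omega)).symm.trans hQ1
      have := (h2 B).mp hP2
      omega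
  rw [hA, hB, hAB]
end

section
/- Let G be a finite Abelian p-group with basis {Q_1,...,Q_N}. Let K = sum q_i Q_i and K' = sum q_i' Q_i be elements of G with K = p^e K', and suppose that for each i, q_i = 0 implies q_i' = 0. Then nu_p(K) = e + nu_p(K'). -/
private lemma sSup_coe_image_eq_top {S : Set ℕ} (h : ∀ n, n ∈ S) :
    sSup (((↑) : ℕ → ℕ∞) '' S) = ⊤ := by
  rw [sSup_eq_top]
  intro b hb
  lift b to ℕ using hb.ne
  exact ⟨((b + 1 : ℕ) : ℕ∞), ⟨b + 1, h _, rfl⟩, by exact_mod_cast Nat.lt_succ_self b⟩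

private lemma sSup_coe_image_eq {S : Set ℕ} {M : ℕ} (hM : M ∈ S) (h : ∀ s ∈ S, s ≤ M) :
    sSup (((↑) : ℕ → ℕ∞) '' S) = (M : ℕ∞) := by
  apply le_antisymm
  · apply sSup_le
    rintro x ⟨s, hs, rfl⟩
    exact_mod_cast h s hs
  · exact le_sSup ⟨M, hM, rfl⟩

/-- If `K = p ^ e • K'` and every vanishing canonical coefficient of `K` forces the
corresponding coefficient of `K'` to vanish, then `ν_p K = e + ν_p K'`. -/
theorem nuP_smul_eq {G : Type*} [AddCommGroup G] [Fintype G]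
    {p : ℕ} (hp : p.Prime) (hG : ∀ g : G, ∃ k : ℕ, p ^ k • g = 0)
    {N : ℕ} (Q : Fin N → G) (hQ : IsBasis Q)
    (K K' : G) (q q' : Fin N → ℕ)
    (hqlt : ∀ i, q i < addOrderOf (Q i)) (hK : K = ∑ i, q i • Q i)
    (hq'lt : ∀ i, q' i < addOrderOf (Q i)) (hK' : K' = ∑ i, q' i • Q i)
    (e : ℕ) (hKK' : K = p ^ e • K')
    (hzero : ∀ i, q i = 0 → q' i = 0) :
    nuP p Q K = e + nuP p Q K' := by
  classical
  -- uniqueness of representations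
  obtain ⟨b, hb, hbu⟩ := hQ K
  obtain ⟨b', hb', hbu'⟩ := hQ K'
  have hqb : q = b := hbu q ⟨hqlt, hK⟩
  have hq'b : q' = b' := hbu' q' ⟨hq'lt, hK'⟩
  have huniq : ∀ y : Fin N → ℕ,
      ((∀ i, y i < addOrderOf (Q i)) ∧ K = ∑ i, y i • Q i) → y = q := by
    intro y hy; rw [hbu y hy, hqb]
  have huniq' : ∀ y : Fin N → ℕ,
      ((∀ i, y i < addOrderOf (Q i)) ∧ K' = ∑ i, y i • Q i) → y = q' := by
    intro y hy; rw [hbu' y hy, hq'b]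
  -- rewrite nuP sets
  have hsetK : {r : ℕ | ∀ y : Fin N → ℕ,
      ((∀ i, y i < addOrderOf (Q i)) ∧ K = ∑ i, y i • Q i) → ∀ i, p ^ r ∣ y i}
      = {r : ℕ | ∀ i, p ^ r ∣ q i} := by
    ext r
    constructor
    · intro h i; exact h q ⟨hqlt, hK⟩ i
    · intro h y hy i; rw [huniq y hy]; exact h i
  have hsetK' : {r : ℕ | ∀ y : Fin N → ℕ,
      ((∀ i, y i < addOrderOf (Q i)) ∧ K' = ∑ i, y i • Q i) → ∀ i, p ^ r ∣ y i}
      = {r : ℕ | ∀ i, p ^ r ∣ q' i} := by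
    ext r
    constructor
    · intro h i; exact h q' ⟨hq'lt, hK'⟩ i
    · intro h y hy i; rw [huniq' y hy]; exact h i
  -- orders are powers of p
  have hord : ∀ i, ∃ a : ℕ, addOrderOf (Q i) = p ^ a := by
    intro i
    obtain ⟨k, hk⟩ := hG (Q i)
    obtain ⟨a, -, ha⟩ := (Nat.dvd_prime_pow hp).mp (addOrderOf_dvd_of_nsmul_eq_zero hk)
    exact ⟨a, ha⟩
  choose a ha using hord
  have hApos : ∀ i, 0 < addOrderOf (Q i) := fun i => addOrderOf_pos (Q i)
  -- coefficient identity
  have hqi : ∀ i, q i = (p ^ e * q' i) % addOrderOf (Q i) := by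
    have h1 : ∀ i, (p ^ e * q' i) % addOrderOf (Q i) < addOrderOf (Q i) :=
      fun i => Nat.mod_lt _ (hApos i)
    have h2 : K = ∑ i, ((p ^ e * q' i) % addOrderOf (Q i)) • Q i := by
      rw [hKK', hK', Finset.smul_sum]
      refine Finset.sum_congr rfl fun i _ => ?_
      rw [mod_addOrderOf_nsmul, smul_smul]
    intro i
    have := huniq _ ⟨h1, h2⟩
    exact (congrFun this i).symm
  -- p ^ r ∣ p ^ e * q' i ↔ p ^ (r - e) ∣ q' i
  have hcentral : ∀ r (m : ℕ), p ^ r ∣ p ^ e * m ↔ p ^ (r - e) ∣ m := by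
    intro r m
    rcases le_or_gt r e with hre | hre
    · simp only [Nat.sub_eq_zero_of_le hre, pow_zero, one_dvd, iff_true]
      exact dvd_mul_of_dvd_left (pow_dvd_pow p hre) m
    · have hr : r = e + (r - e) := by omega
      rw [hr, pow_add, Nat.mul_dvd_mul_iff_left (pow_pos hp.pos e), Nat.add_sub_cancel_left]
  -- key pointwise equivalence
  have key : ∀ r i, (p ^ r ∣ q i ↔ p ^ (r - e) ∣ q' i) := by
    intro r i
    rw [← hcentral r (q' i)]
    constructor
    · intro h
      by_cases hq0 : q i = 0
      · rw [hzero i hq0, mul_zero]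
        exact dvd_zero _
      · have hle : p ^ r ≤ q i := Nat.le_of_dvd (Nat.pos_of_ne_zero hq0) h
        have hra : p ^ r < p ^ a i := lt_of_le_of_lt hle (ha i ▸ hqlt i)
        have hr_le : r ≤ a i := le_of_lt ((Nat.pow_lt_pow_iff_right hp.one_lt).mp hra)
        have hdvdA : p ^ r ∣ addOrderOf (Q i) := (ha i) ▸ pow_dvd_pow p hr_le
        rw [hqi i, Nat.dvd_mod_iff hdvdA] at h
        exact h
    · intro h
      rcases le_or_gt r (a i) with hr | hr
      · have hdvdA : p ^ r ∣ addOrderOf (Q i) := (ha i) ▸ pow_dvd_pow p hr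
        rw [hqi i, Nat.dvd_mod_iff hdvdA]
        exact h
      · -- p ^ a i ∣ q i and q i < p ^ a i, so q i = 0
        have hdvdA : p ^ a i ∣ addOrderOf (Q i) := (ha i) ▸ dvd_rfl
        have h' : p ^ a i ∣ p ^ e * q' i := (pow_dvd_pow p hr.le).trans h
        have : p ^ a i ∣ q i := by rw [hqi i, Nat.dvd_mod_iff hdvdA]; exact h'
        have hq0 : q i = 0 := Nat.eq_zero_of_dvd_of_lt this (ha i ▸ hqlt i)
        rw [hq0]
        exact dvd_zero _
  unfold nuP
  rw [hsetK, hsetK']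
  by_cases hq'0 : ∀ i, q' i = 0
  · have h1 : ∀ n, n ∈ {r : ℕ | ∀ i, p ^ r ∣ q i} := by
      intro n i
      rw [hqi i, hq'0 i, mul_zero, Nat.zero_mod]
      exact dvd_zero _
    have h2 : ∀ n, n ∈ {r : ℕ | ∀ i, p ^ r ∣ q' i} := by
      intro n i; rw [hq'0 i]; exact dvd_zero _
    rw [sSup_coe_image_eq_top h1, sSup_coe_image_eq_top h2, add_top]
  · push_neg at hq'0
    obtain ⟨j, hj⟩ := hq'0
    set P : ℕ → Prop := fun s => ∀ i, p ^ s ∣ q' i with hP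
    have hbound : ∀ s, P s → s ≤ q' j := fun s hs =>
      le_trans (Nat.lt_pow_self hp.one_lt : s < p ^ s).le
        (Nat.le_of_dvd (Nat.pos_of_ne_zero hj) (hs j))
    set M := Nat.findGreatest P (q' j) with hM
    have hPM : P M := Nat.findGreatest_spec (Nat.zero_le _) (fun i => by simp)
    have hmax : ∀ s, P s → s ≤ M := fun s hs => Nat.le_findGreatest (hbound s hs) hs
    have h1 : sSup (((↑) : ℕ → ℕ∞) '' {r : ℕ | ∀ i, p ^ r ∣ q' i}) = (M : ℕ∞) :=
      sSup_coe_image_eq hPM hmax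
    have h2 : sSup (((↑) : ℕ → ℕ∞) '' {r : ℕ | ∀ i, p ^ r ∣ q i}) = ((e + M : ℕ) : ℕ∞) := by
      apply sSup_coe_image_eq
      · intro i
        rw [key (e + M) i]
        simpa using hPM i
      · intro s hs
        have hPs : P (s - e) := fun i => (key s i).mp (hs i)
        have := hmax _ hPs
        omega
    rw [h1, h2]
    push_cast
    rfl
end

section
/- Let G be a finite Abelian p-group with sorted basis {Q_1,...,Q_N} and let K in G with |K| = p^e and multipliers m_1,...,m_N be given. If there exists a basis {P_1,...,P_N} of G with K = m_1 P_1 + ... + m_N P_N, then |K| = |m_1 Q_1 + ... + m_N Q_N| and nu_p(p^j K) = nu_p(p^j (m_1 Q_1 + ... + m_N Q_N)) for all 0 <= j < e. -/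
section Aux

variable {G : Type*} [AddCommGroup G] [Fintype G] {N : ℕ}

private lemma sum_mod_eq (P : Fin N → G) (c : Fin N → ℕ) :
    ∑ i, (c i % addOrderOf (P i)) • P i = ∑ i, c i • P i :=
  Finset.sum_congr rfl fun i _ => mod_addOrderOf_nsmul _ _

private lemma basis_eq_iff {P : Fin N → G} (hP : IsBasis P) (c d : Fin N → ℕ) :
    ∑ i, c i • P i = ∑ i, d i • P i ↔ ∀ i, c i ≡ d i [MOD addOrderOf (P i)] := by
  constructor
  · intro h i
    obtain ⟨b, _, hb⟩ := hP (∑ i, c i • P i)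
    have h1 : (fun i => c i % addOrderOf (P i)) = b :=
      hb _ ⟨fun i => Nat.mod_lt _ (addOrderOf_pos _), (sum_mod_eq P c).symm⟩
    have h2 : (fun i => d i % addOrderOf (P i)) = b :=
      hb _ ⟨fun i => Nat.mod_lt _ (addOrderOf_pos _), h.trans (sum_mod_eq P d).symm⟩
    exact congrFun (h1.trans h2.symm) i
  · intro h
    rw [← sum_mod_eq P c, ← sum_mod_eq P d]
    exact Finset.sum_congr rfl fun i _ => by rw [h i]

private lemma basis_sum_eq_zero_iff {P : Fin N → G} (hP : IsBasis P) (c : Fin N → ℕ) :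
    ∑ i, c i • P i = 0 ↔ ∀ i, addOrderOf (P i) ∣ c i := by
  have h0 : (0 : G) = ∑ i, (fun _ : Fin N => 0) i • P i := by simp
  rw [h0, basis_eq_iff hP]
  exact forall_congr' fun i => by
    rw [Nat.modEq_zero_iff_dvd]

private lemma smul_sum_eq (R : Fin N → G) (c : Fin N → ℕ) (s : ℕ) :
    s • ∑ i, c i • R i = ∑ i, (s * c i) • R i := by
  rw [Finset.smul_sum]
  exact Finset.sum_congr rfl fun i _ => smul_smul s (c i) (R i)

private lemma basis_mem_smul_iff {P : Fin N → G} (hP : IsBasis P) (c : Fin N → ℕ) (s : ℕ) :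
    (∃ h : G, ∑ i, c i • P i = s • h) ↔ ∀ i, Nat.gcd s (addOrderOf (P i)) ∣ c i := by
  constructor
  · rintro ⟨h, hh⟩ i
    obtain ⟨b, ⟨_, rfl⟩, _⟩ := hP h
    rw [smul_sum_eq] at hh
    have hme := (basis_eq_iff hP c (fun i => s * b i)).1 hh i
    rw [Nat.modEq_iff_dvd] at hme
    have hdvd : (Nat.gcd s (addOrderOf (P i)) : ℤ) ∣ (c i : ℤ) := by
      have h1 : (Nat.gcd s (addOrderOf (P i)) : ℤ) ∣ ((addOrderOf (P i) : ℕ) : ℤ) := by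
        exact_mod_cast Int.natCast_dvd_natCast.2 (Nat.gcd_dvd_right _ _)
      have h2 : (Nat.gcd s (addOrderOf (P i)) : ℤ) ∣ ((s * b i : ℕ) : ℤ) := by
        exact_mod_cast Int.natCast_dvd_natCast.2
          (dvd_mul_of_dvd_left (Nat.gcd_dvd_left _ _) _)
      have h3 := dvd_sub h2 (h1.trans hme)
      simpa using h3
    exact_mod_cast hdvd
  · intro hc
    have key : ∀ i, ∃ d : ℕ, c i ≡ s * d [MOD addOrderOf (P i)] := by
      intro i
      set n := addOrderOf (P i) with hn
      have hnpos : 0 < n := addOrderOf_pos _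
      obtain ⟨t, ht⟩ := hc i
      set A := Nat.gcdA s n
      refine ⟨(((t : ℤ) * A) % (n : ℤ)).toNat, ?_⟩
      rw [Nat.modEq_iff_dvd]
      have hnn : (0 : ℤ) < (n : ℤ) := by exact_mod_cast hnpos
      have htn : ((((t : ℤ) * A) % (n : ℤ)).toNat : ℤ) = ((t : ℤ) * A) % (n : ℤ) :=
        Int.toNat_of_nonneg (Int.emod_nonneg _ hnn.ne')
      push_cast [htn]
      -- goal : (n:ℤ) ∣ s * ((t * A) % n) - c i
      have hmod : (n : ℤ) ∣ ((t : ℤ) * A) % (n : ℤ) - (t : ℤ) * A := by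
        have : (((t : ℤ) * A) % (n : ℤ)) % (n : ℤ) = ((t : ℤ) * A) % (n : ℤ) :=
          Int.emod_emod_of_dvd _ dvd_rfl
        exact Int.ModEq.dvd (this : Int.ModEq (n : ℤ) _ _).symm
      have hbez : (Nat.gcd s n : ℤ) = s * A + n * Nat.gcdB s n := Nat.gcd_eq_gcd_ab s n
      have hcz : (c i : ℤ) = (s * A + n * Nat.gcdB s n) * t := by
        rw [← hbez]; exact_mod_cast ht
      have h1 : (n : ℤ) ∣ (s : ℤ) * (((t : ℤ) * A) % (n : ℤ)) - s * (t * A) := by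
        have := hmod.mul_left (s : ℤ)
        rw [mul_sub] at this
        exact this
      have h2 : (n : ℤ) ∣ (s : ℤ) * (t * A) - c i := by
        rw [hcz]; ring_nf
        exact ⟨-(Nat.gcdB s n * t), by ring⟩
      have := dvd_add h1 h2
      rw [sub_add_sub_cancel] at this
      exact this
    choose d hd using key
    refine ⟨∑ i, d i • P i, ?_⟩
    rw [smul_sum_eq]
    exact (basis_eq_iff hP c (fun i => s * d i)).2 hd

private lemma nuP_set_eq {p : ℕ} (hp : p.Prime) {Q : Fin N → G} (hQ : IsBasis Q)
    (hord : ∀ i, ∃ k, addOrderOf (Q i) = p ^ k) (g : G) :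
    {r : ℕ | ∀ q : Fin N → ℕ,
        ((∀ i, q i < addOrderOf (Q i)) ∧ g = ∑ i, q i • Q i) → ∀ i, p ^ r ∣ q i}
      = {r : ℕ | ∃ h : G, g = p ^ r • h} := by
  ext r
  simp only [Set.mem_setOf_eq]
  constructor
  · intro hr
    obtain ⟨q, ⟨hq1, hq2⟩, _⟩ := hQ g
    have hd := hr q ⟨hq1, hq2⟩
    refine ⟨∑ i, (q i / p ^ r) • Q i, ?_⟩
    rw [hq2, smul_sum_eq]
    exact Finset.sum_congr rfl fun i _ => by rw [Nat.mul_div_cancel' (hd i)]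
  · rintro ⟨h, hh⟩ q ⟨hq1, hq2⟩ i
    have hgcd := (basis_mem_smul_iff hQ q (p ^ r)).1 ⟨h, hq2 ▸ hh⟩ i
    obtain ⟨k, hk⟩ := hord i
    rcases le_total k r with hkr | hrk
    · have hdk : p ^ k ∣ q i := by
        rwa [hk, Nat.gcd_eq_right (pow_dvd_pow p hkr)] at hgcd
      have hzero : q i = 0 := Nat.eq_zero_of_dvd_of_lt hdk (hk ▸ hq1 i)
      simp [hzero]
    · rwa [hk, Nat.gcd_eq_left (pow_dvd_pow p hrk)] at hgcd

end Aux

/-- Existence theorem, necessity: if some basis `P` (with the same sorted orders as `Q`)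
satisfies `K = ∑ m i • P i`, then `|K| = |∑ m i • Q i|` and
`ν_p (p^j • K) = ν_p (p^j • ∑ m i • Q i)` for all `0 ≤ j < e` where `|K| = p ^ e`. -/
theorem existence_necessary {G : Type*} [AddCommGroup G] [Fintype G]
    {p : ℕ} (hp : p.Prime) (hG : ∀ g : G, ∃ k : ℕ, p ^ k • g = 0)
    {N : ℕ} (Q : Fin N → G) (hQ : IsBasis Q)
    (hQsorted : Monotone fun i => addOrderOf (Q i))
    (K : G) (e : ℕ) (hordK : addOrderOf K = p ^ e)
    (m : Fin N → ℕ) (hm : ∀ i, m i < addOrderOf (Q i))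
    (hsol : ∃ P : Fin N → G, IsBasis P ∧ (∀ i, addOrderOf (P i) = addOrderOf (Q i)) ∧
      K = ∑ i, m i • P i) :
    addOrderOf K = addOrderOf (∑ i, m i • Q i) ∧
    ∀ j : ℕ, j < e → nuP p Q (p ^ j • K) = nuP p Q (p ^ j • ∑ i, m i • Q i) := by
  obtain ⟨P, hP, hordP, hKP⟩ := hsol
  have hordQpow : ∀ i, ∃ k, addOrderOf (Q i) = p ^ k := by
    intro i
    obtain ⟨k, hk⟩ := hG (Q i)
    obtain ⟨j, _, hj⟩ := (Nat.dvd_prime_pow hp).1 (addOrderOf_dvd_of_nsmul_eq_zero hk)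
    exact ⟨j, hj⟩
  constructor
  · rw [hKP, addOrderOf_eq_addOrderOf_iff]
    intro n
    rw [smul_sum_eq, smul_sum_eq, basis_sum_eq_zero_iff hP, basis_sum_eq_zero_iff hQ]
    exact forall_congr' fun i => by rw [hordP i]
  · intro j _
    rw [hKP, smul_sum_eq, smul_sum_eq]
    have hset : {r : ℕ | ∃ h : G, ∑ i, (p ^ j * m i) • P i = p ^ r • h}
        = {r : ℕ | ∃ h : G, ∑ i, (p ^ j * m i) • Q i = p ^ r • h} := by
      ext r
      simp only [Set.mem_setOf_eq]
      rw [basis_mem_smul_iff hP, basis_mem_smul_iff hQ]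
      exact forall_congr' fun i => by rw [hordP i]
    unfold nuP
    rw [nuP_set_eq hp hQ hordQpow, nuP_set_eq hp hQ hordQpow, hset]
end

section
/- Let G be a finite Abelian p-group with sorted basis {Q_1,...,Q_N} and let K in G with |K| = p^e. If |K| = |m_1 Q_1 + ... + m_N Q_N| and nu_p(p^j K) = nu_p(p^j (m_1 Q_1 + ... + m_N Q_N)) for all 0 <= j < e, then there exists a basis {P_1,...,P_N} of G with |P_i| = |Q_i| such that K = m_1 P_1 + ... + m_N P_N. -/
set_option linter.unusedSectionVars false

section Basics
variable {G : Type*} [AddCommGroup G] {ι : Type*} [Fintype ι]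

lemma addOrderOf_equiv {H : Type*} [AddCommGroup H] (φ : G ≃+ H) (x : G) :
    addOrderOf (φ x) = addOrderOf x :=
  addOrderOf_injective φ.toAddMonoidHom φ.injective x

lemma isBasis_comp_equiv {H : Type*} [AddCommGroup H] {Q : ι → G} (hQ : IsBasis Q)
    (φ : G ≃+ H) : IsBasis (fun i => φ (Q i)) := by
  intro g
  obtain ⟨b, ⟨hb1, hb2⟩, hbu⟩ := hQ (φ.symm g)
  refine ⟨b, ⟨fun i => by rw [addOrderOf_equiv]; exact hb1 i, ?_⟩, ?_⟩
  · have := congrArg φ hb2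
    simpa [map_sum] using this
  · rintro b' ⟨hb1', hb2'⟩
    refine hbu b' ⟨fun i => by have := hb1' i; rwa [addOrderOf_equiv] at this, ?_⟩
    apply φ.injective
    simpa [map_sum] using hb2'

end Basics

set_option linter.unusedSectionVars false

section Equiv
variable {G : Type*} [AddCommGroup G] {ι : Type*} [Fintype ι] [DecidableEq ι]
variable {n : ι → ℕ} [∀ i, NeZero (n i)]

lemma nsmul_mod {x : G} {m k : ℕ} (h : addOrderOf x ∣ k) : (m % k) • x = m • x := by
  conv_rhs => rw [← Nat.div_add_mod m k]
  rw [add_smul, mul_comm, mul_smul]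
  have : k • x = 0 := by
    obtain ⟨c, rfl⟩ := h
    rw [mul_comm, mul_smul, addOrderOf_nsmul_eq_zero, smul_zero]
  rw [this, smul_zero, zero_add]

lemma sumMap_add (Q : ι → G) (hord : ∀ i, addOrderOf (Q i) = n i) (b c : ∀ i, ZMod (n i)) :
    (∑ i, ((b + c) i).val • Q i) = (∑ i, (b i).val • Q i) + ∑ i, (c i).val • Q i := by
  rw [← Finset.sum_add_distrib]
  refine Finset.sum_congr rfl fun i _ => ?_
  have : ((b + c) i).val = ((b i).val + (c i).val) % n i := by
    simp [Pi.add_apply, ZMod.val_add]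
  rw [this, nsmul_mod (by rw [hord i]), add_smul]

/-- The additive equivalence given by a basis. -/
noncomputable def basisEquiv {Q : ι → G} (hQ : IsBasis Q)
    (hord : ∀ i, addOrderOf (Q i) = n i) : (∀ i, ZMod (n i)) ≃+ G := by
  refine AddEquiv.mk' (Equiv.ofBijective (fun b => ∑ i, (b i).val • Q i) ⟨?_, ?_⟩)
    (fun b c => sumMap_add Q hord b c)
  · intro b c h
    obtain ⟨b₀, _, hu⟩ := hQ (∑ i, (b i).val • Q i)
    have hb : (fun i => (b i).val) = b₀ :=
      hu _ ⟨fun i => by rw [hord i]; exact ZMod.val_lt (b i), rfl⟩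
    have hc : (fun i => (c i).val) = b₀ :=
      hu _ ⟨fun i => by rw [hord i]; exact ZMod.val_lt (c i), h⟩
    funext i
    have := congrFun (hb.trans hc.symm) i
    exact ZMod.val_injective _ this
  · intro g
    obtain ⟨b₀, ⟨hb1, hb2⟩, _⟩ := hQ g
    refine ⟨fun i => (b₀ i : ZMod (n i)), ?_⟩
    conv_rhs => rw [hb2]
    refine Finset.sum_congr rfl fun i _ => ?_
    rw [ZMod.val_natCast_of_lt (by rw [← hord i]; exact hb1 i)]

lemma basisEquiv_apply {Q : ι → G} (hQ : IsBasis Q) (hord : ∀ i, addOrderOf (Q i) = n i)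
    (b : ∀ i, ZMod (n i)) : basisEquiv hQ hord b = ∑ i, (b i).val • Q i := rfl

lemma basisEquiv_single {Q : ι → G} (hQ : IsBasis Q) (hord : ∀ i, addOrderOf (Q i) = n i)
    (i : ι) : basisEquiv hQ hord (Pi.single i 1) = Q i := by
  rw [basisEquiv_apply, Finset.sum_eq_single i]
  · rcases eq_or_ne (n i) 1 with h1 | h1
    · have : Q i = 0 := by
        rw [← AddMonoid.addOrderOf_eq_one_iff, hord i, h1]
      have h2 : ((Pi.single i 1 : ∀ i, ZMod (n i)) i).val • Q i = 0 := by rw [this, smul_zero]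
      rw [h2, this]
    · haveI : Fact (1 < n i) :=
        ⟨lt_of_le_of_ne (Nat.one_le_iff_ne_zero.2 (NeZero.ne _)) (Ne.symm h1)⟩
      have : ((Pi.single i 1 : ∀ i, ZMod (n i)) i).val = 1 := by
        rw [Pi.single_eq_same]; exact ZMod.val_one (n i)
      rw [this, one_smul]
  · intro j _ hj
    rw [Pi.single_eq_of_ne hj]
    simp
  · simp

lemma basisEquiv_symm_apply {Q : ι → G} (hQ : IsBasis Q) (hord : ∀ i, addOrderOf (Q i) = n i)
    (x : G) : ∑ i, (((basisEquiv hQ hord).symm x) i).val • Q i = x := by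
  conv_rhs => rw [← (basisEquiv hQ hord).apply_symm_apply x]
  rfl

/-- Two bases with the same orders are related by an automorphism. -/
lemma equivOfBases {Q R : ι → G} (hn : ∀ i, addOrderOf (Q i) = n i)
    (hQ : IsBasis Q) (hR : IsBasis R)
    (hord : ∀ i, addOrderOf (R i) = addOrderOf (Q i)) :
    ∃ φ : G ≃+ G, ∀ i, φ (Q i) = R i := by
  refine ⟨((basisEquiv hQ hn).symm.trans (basisEquiv hR (fun i => (hord i).trans (hn i)))), ?_⟩
  intro i
  have : (basisEquiv hQ hn).symm (Q i) = Pi.single i 1 :=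
    (basisEquiv hQ hn).symm_apply_eq.2 (basisEquiv_single hQ hn i).symm
  simp only [AddEquiv.trans_apply, this]
  exact basisEquiv_single hR _ i

end Equiv

section OrdLemmas
variable {G : Type*} [AddMonoid G]

lemma ord_eq_pow {p : ℕ} (hp : p.Prime) {x : G} {m : ℕ}
    (h1 : p ^ m • x = 0) (h2 : ∀ l, l < m → p ^ l • x ≠ 0) : addOrderOf x = p ^ m := by
  have hdvd : addOrderOf x ∣ p ^ m := addOrderOf_dvd_of_nsmul_eq_zero h1
  obtain ⟨l, hl, hord⟩ := (Nat.dvd_prime_pow hp).1 hdvd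
  rcases eq_or_lt_of_le hl with rfl | hlt
  · exact hord
  · exfalso
    refine h2 l hlt ?_
    rw [← hord]
    exact addOrderOf_nsmul_eq_zero x

lemma pow_smul_ne_zero_of_ord {p : ℕ} (hp : p.Prime) {x : G} {m : ℕ}
    (h : addOrderOf x = p ^ m) {l : ℕ} (hl : l < m) : p ^ l • x ≠ 0 := by
  intro h0
  have := addOrderOf_dvd_of_nsmul_eq_zero h0
  rw [h] at this
  exact absurd (Nat.le_of_dvd (pow_pos hp.pos _) this)
    (not_le.2 (Nat.pow_lt_pow_right hp.one_lt hl))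

end OrdLemmas

section ZModLemmas
variable {p : ℕ}

lemma zmod_pow_smul_eq_zero_iff (hp : p.Prime) {E : ℕ} (m a : ℕ) :
    (p ^ m • ((p ^ a : ℕ) : ZMod (p ^ E)) = 0) ↔ E ≤ m + a := by
  rw [nsmul_eq_mul, ← Nat.cast_mul, ZMod.natCast_eq_zero_iff, ← pow_add]
  exact Nat.pow_dvd_pow_iff_le_right hp.one_lt

/-- unit decomposition in `ZMod (p ^ E)`. -/
lemma zmod_unit_decomp (hp : p.Prime) {E : ℕ} (z : ZMod (p ^ E)) (hz : z ≠ 0) :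
    ∃ u : (ZMod (p ^ E))ˣ,
      z = ((p ^ (padicValNat p z.val) : ℕ) : ZMod (p ^ E)) * u ∧
      padicValNat p z.val < E ∧
      ¬ p ∣ z.val / p ^ (padicValNat p z.val) ∧
      p ^ (padicValNat p z.val) * (z.val / p ^ (padicValNat p z.val)) = z.val := by
  haveI : NeZero (p ^ E) := ⟨(pow_pos hp.pos _).ne'⟩
  have hval : z.val ≠ 0 := fun h => hz ((ZMod.val_eq_zero z).1 h)
  set v := padicValNat p z.val with hv
  have hfac : z.val.factorization p = v := Nat.factorization_def z.val hp
  set w := z.val / p ^ v with hw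
  have hzw : p ^ v * w = z.val := by
    have := Nat.ordProj_mul_ordCompl_eq_self z.val p
    rwa [hfac] at this
  have hpw : ¬ p ∣ w := by
    have := Nat.not_dvd_ordCompl hp hval
    rwa [hfac] at this
  have hunit : IsUnit ((w : ℕ) : ZMod (p ^ E)) := by
    rw [ZMod.isUnit_iff_coprime]
    exact ((Nat.Prime.coprime_iff_not_dvd hp).2 hpw).symm.pow_right E
  refine ⟨hunit.unit, ?_, ?_, hpw, hzw⟩
  · rw [IsUnit.unit_spec, ← Nat.cast_mul, hzw]
    exact (ZMod.natCast_rightInverse z).symm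
  · have h1 : p ^ v ≤ z.val := Nat.le_of_dvd (Nat.pos_of_ne_zero hval) pow_padicValNat_dvd
    have h2 : z.val < p ^ E := ZMod.val_lt z
    exact (Nat.pow_lt_pow_iff_right hp.one_lt).1 (h1.trans_lt h2)

lemma zmod_pow_dvd_iff (hp : p.Prime) {E : ℕ} (z : ZMod (p ^ E)) (r : ℕ) :
    (∃ c : ZMod (p ^ E), z = p ^ r • c) ↔ p ^ min r E ∣ z.val := by
  haveI : NeZero (p ^ E) := ⟨(pow_pos hp.pos _).ne'⟩
  constructor
  · rintro ⟨c, rfl⟩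
    have hc : ((c.val : ℕ) : ZMod (p ^ E)) = c := ZMod.natCast_rightInverse c
    have : ((p ^ r • c : ZMod (p ^ E))).val = (p ^ r * c.val) % p ^ E := by
      conv_lhs => rw [nsmul_eq_mul, ← hc, ← Nat.cast_mul]
      rw [ZMod.val_natCast]
    rw [this, Nat.dvd_mod_iff (pow_dvd_pow p (min_le_right r E))]
    exact dvd_mul_of_dvd_left (pow_dvd_pow p (min_le_left r E)) _
  · intro hdvd
    rcases le_or_gt r E with hle | hlt
    · rw [min_eq_left hle] at hdvd
      obtain ⟨t, ht⟩ := hdvd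
      refine ⟨(t : ZMod (p ^ E)), ?_⟩
      rw [nsmul_eq_mul, ← Nat.cast_mul, ← ht]
      exact (ZMod.natCast_rightInverse z).symm
    · rw [min_eq_right hlt.le] at hdvd
      have hz0 : z = 0 :=
        (ZMod.val_eq_zero z).1 (Nat.eq_zero_of_dvd_of_lt hdvd (ZMod.val_lt z) |>
          fun h => h) |>
          fun h => h
      exact ⟨0, by rw [hz0, smul_zero]⟩

lemma zmod_val_pow_cast (hp : p.Prime) {E a : ℕ} (ha : a < E) :
    (((p ^ a : ℕ) : ZMod (p ^ E))).val = p ^ a := by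
  haveI : NeZero (p ^ E) := ⟨(pow_pos hp.pos _).ne'⟩
  exact ZMod.val_natCast_of_lt (Nat.pow_lt_pow_right hp.one_lt ha)

end ZModLemmas

section PiBasis
variable {ι : Type*} [Fintype ι] [DecidableEq ι]
variable {n : ι → ℕ} [∀ i, NeZero (n i)]

lemma addOrderOf_single_one (i : ι) :
    addOrderOf (Pi.single i (1 : ZMod (n i)) : ∀ j, ZMod (n j)) = n i := by
  have h1 : (Pi.single i (1 : ZMod (n i)) : ∀ j, ZMod (n j))
      = AddMonoidHom.single (fun j => ZMod (n j)) i 1 := rfl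
  rw [h1, addOrderOf_injective (AddMonoidHom.single (fun j => ZMod (n j)) i)
    (fun a b h => Pi.single_injective i h) (1 : ZMod (n i))]
  exact ZMod.addOrderOf_one (n i)

lemma pi_expand (x : ∀ j, ZMod (n j)) :
    x = ∑ i, (x i).val • Pi.single i (1 : ZMod (n i)) := by
  funext k
  rw [Finset.sum_apply, Finset.sum_eq_single k]
  · rw [Pi.smul_apply, Pi.single_eq_same, nsmul_eq_mul, mul_one]
    exact ((ZMod.natCast_rightInverse (x k)).symm : x k = _)
  · intro j _ hj
    rw [Pi.smul_apply, Pi.single_eq_of_ne hj.symm, smul_zero]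
  · simp

lemma isBasis_single : IsBasis (fun i => Pi.single i (1 : ZMod (n i)) : ι → ∀ j, ZMod (n j)) := by
  intro g
  refine ⟨fun i => (g i).val, ⟨fun i => ?_, pi_expand g⟩, ?_⟩
  · rw [addOrderOf_single_one]
    exact ZMod.val_lt (g i)
  · rintro b ⟨hb1, hb2⟩
    funext k
    have := congrFun hb2 k
    rw [Finset.sum_apply, Finset.sum_eq_single k] at this
    · simp only [Pi.smul_apply, Pi.single_eq_same, nsmul_eq_mul, mul_one] at this
      rw [this, ZMod.val_natCast_of_lt]
      rw [← addOrderOf_single_one (n := n) k]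
      exact hb1 k
    · intro j _ hj
      simp only [Pi.smul_apply] at *
      rw [Pi.single_eq_of_ne hj.symm, smul_zero]
    · simp

lemma isBasis_comp_perm {G : Type*} [AddCommGroup G] {Q : ι → G} (hQ : IsBasis Q)
    (σ : Equiv.Perm ι) : IsBasis (fun i => Q (σ i)) := by
  intro g
  obtain ⟨b, ⟨hb1, hb2⟩, hbu⟩ := hQ g
  refine ⟨fun i => b (σ i), ⟨fun i => hb1 (σ i), ?_⟩, ?_⟩
  · rw [hb2]
    exact (Equiv.sum_comp σ (fun k => b k • Q k)).symm
  · rintro b' ⟨hb1', hb2'⟩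
    have : (fun k => b' (σ.symm k)) = b := by
      refine hbu _ ⟨fun i => ?_, ?_⟩
      · have := hb1' (σ.symm i)
        simpa using this
      · rw [hb2']
        rw [← Equiv.sum_comp σ (fun k => b' (σ.symm k) • Q k)]
        simp
    funext i
    have := congrFun this (σ i)
    simpa using this

set_option maxHeartbeats 1000000 in
/-- Swap automorphism. -/
lemma swap_aut (i j : ι) (hij : n i = n j) :
    ∃ ψ : (∀ k, ZMod (n k)) ≃+ (∀ k, ZMod (n k)),
      ∀ (x : ∀ k, ZMod (n k)) (l : ι), ψ x l = ((x (Equiv.swap i j l)).val : ZMod (n l)) := by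
  have hord : ∀ k, addOrderOf ((fun k => Pi.single (Equiv.swap i j k) (1 : ZMod (n (Equiv.swap i j k))) : ι → ∀ j', ZMod (n j')) k)
      = addOrderOf (Pi.single k (1 : ZMod (n k)) : ∀ j', ZMod (n j')) := by
    intro k
    rw [addOrderOf_single_one, addOrderOf_single_one]
    by_cases hk : k = i
    · subst hk; rw [Equiv.swap_apply_left]; exact hij.symm
    by_cases hk' : k = j
    · subst hk'; rw [Equiv.swap_apply_right]; exact hij
    · rw [Equiv.swap_apply_of_ne_of_ne hk hk']
  have hb1 : IsBasis (fun i => (Pi.single i (1 : ZMod (n i)) : ∀ j', ZMod (n j'))) :=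
    isBasis_single
  have hb2 : IsBasis (fun k => (Pi.single (Equiv.swap i j k)
      (1 : ZMod (n (Equiv.swap i j k))) : ∀ j', ZMod (n j'))) :=
    isBasis_comp_perm hb1 (Equiv.swap i j)
  have hn : ∀ k, addOrderOf ((fun i => (Pi.single i (1 : ZMod (n i)) : ∀ j', ZMod (n j'))) k) = n k :=
    fun k => addOrderOf_single_one k
  obtain ⟨ψ, hψ⟩ := equivOfBases (n := n) hn hb1 hb2 hord
  refine ⟨ψ, fun x l => ?_⟩
  have hx : ψ x = ∑ k, (x k).val • Pi.single (Equiv.swap i j k) (1 : ZMod (n (Equiv.swap i j k))) := by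
    conv_lhs => rw [pi_expand x, map_sum]
    refine Finset.sum_congr rfl fun k _ => ?_
    rw [map_nsmul, hψ k]
  rw [hx, Finset.sum_apply, Finset.sum_eq_single (Equiv.swap i j l)]
  · rw [Equiv.swap_apply_self, Pi.smul_apply, Pi.single_eq_same, nsmul_eq_mul, mul_one]
  · intro k _ hk
    have h2 : Equiv.swap i j k ≠ l := fun h => hk (by rw [← h, Equiv.swap_apply_self])
    rw [Pi.smul_apply, Pi.single_eq_of_ne h2.symm, smul_zero]
  · simp

end PiBasis

section Auts
variable {ι : Type*} [Fintype ι] [DecidableEq ι]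
variable {n : ι → ℕ} [∀ i, NeZero (n i)]

lemma shear_aut (i j : ι) (hij : i ≠ j) (c : ZMod (n i)) (hc : n j • c = 0) :
    ∃ ψ : (∀ k, ZMod (n k)) ≃+ (∀ k, ZMod (n k)),
      ∀ x : ∀ k, ZMod (n k), (∀ k, k ≠ i → ψ x k = x k) ∧ ψ x i = x i + (x j).val • c := by
  have hmod : ∀ a b : ZMod (n j), (a + b).val • c = a.val • c + b.val • c := by
    intro a b
    have h1 : (a + b).val = (a.val + b.val) % n j := ZMod.val_add a b
    have h2 : addOrderOf c ∣ n j := addOrderOf_dvd_of_nsmul_eq_zero hc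
    rw [h1, nsmul_mod h2, add_smul]
  set sgl : (∀ k, ZMod (n k)) → (∀ k, ZMod (n k)) :=
    fun x => Pi.single i ((x j).val • c) with hsgl
  have hsj : ∀ x : ∀ k, ZMod (n k), sgl x j = 0 := fun x => Pi.single_eq_of_ne hij.symm _
  refine ⟨{ toFun := fun x => x + sgl x,
            invFun := fun x => x - sgl x,
            left_inv := ?_, right_inv := ?_, map_add' := ?_ }, ?_⟩
  · intro x
    have hj : sgl (x + sgl x) = sgl x := by
      rw [hsgl]
      simp only [Pi.add_apply, Pi.single_eq_of_ne (Ne.symm hij), add_zero]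
    simp only [hj]
    exact add_sub_cancel_right x _
  · intro x
    have hj : sgl (x - sgl x) = sgl x := by
      rw [hsgl]
      simp only [Pi.sub_apply, Pi.single_eq_of_ne (Ne.symm hij), sub_zero]
    simp only [hj]
    exact sub_add_cancel x _
  · intro x y
    have : sgl (x + y) = sgl x + sgl y := by
      rw [hsgl]
      simp only [Pi.add_apply]
      rw [hmod (x j) (y j), Pi.single_add]
    simp only [this]
    abel
  · intro x
    constructor
    · intro k hk
      show (x + sgl x) k = x k
      rw [Pi.add_apply, hsgl]
      simp only
      rw [Pi.single_eq_of_ne hk, add_zero]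
    · show (x + sgl x) i = x i + (x j).val • c
      rw [Pi.add_apply, hsgl]
      simp only
      rw [Pi.single_eq_same]

lemma diag_aut (d : ∀ i, (ZMod (n i))ˣ) :
    ∃ ψ : (∀ k, ZMod (n k)) ≃+ (∀ k, ZMod (n k)),
      ∀ x : ∀ k, ZMod (n k), ∀ k, ψ x k = (d k : ZMod (n k)) * x k := by
  refine ⟨{ toFun := fun x k => (d k : ZMod (n k)) * x k,
            invFun := fun x k => ((d k)⁻¹ : (ZMod (n k))ˣ) * x k,
            left_inv := ?_, right_inv := ?_, map_add' := ?_ }, fun x k => rfl⟩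
  · intro x; funext k; exact Units.inv_mul_cancel_left (d k) (x k)
  · intro x; funext k; exact Units.mul_inv_cancel_left (d k) (x k)
  · intro x y; funext k; exact mul_add _ _ _

end Auts

section Phases
variable {p N : ℕ} {e : Fin N → ℕ}

/-- valuation of the coefficient at `i`. -/
def vval (p : ℕ) {N : ℕ} {e : Fin N → ℕ} (x : ∀ i, ZMod (p ^ e i)) (i : Fin N) : ℕ :=
  padicValNat p (x i).val

def NoAbsorb (p : ℕ) {N : ℕ} {e : Fin N → ℕ} (x : ∀ i, ZMod (p ^ e i)) : Prop :=
  ∀ i j : Fin N, x i ≠ 0 → x j ≠ 0 → i ≠ j →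
    ¬(vval p x j ≤ vval p x i ∧ e i - vval p x i ≤ e j - vval p x j)

def PurePow (p : ℕ) {N : ℕ} {e : Fin N → ℕ} (x : ∀ i, ZMod (p ^ e i)) : Prop :=
  ∀ i, x i ≠ 0 → x i = ((p ^ vval p x i : ℕ) : ZMod (p ^ e i))

def Placed (p : ℕ) {N : ℕ} {e : Fin N → ℕ} (x : ∀ i, ZMod (p ^ e i)) : Prop :=
  ∀ i, x i ≠ 0 → ∀ j, e j = e i → j ≤ i

lemma phaseA (hp : p.Prime) (x : ∀ i, ZMod (p ^ e i)) :
    ∃ ψ : (∀ i, ZMod (p ^ e i)) ≃+ (∀ i, ZMod (p ^ e i)), NoAbsorb p (ψ x) := by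
  haveI : ∀ i, NeZero (p ^ e i) := fun i => ⟨(pow_pos hp.pos _).ne'⟩
  classical
  suffices h : ∀ (m : ℕ) (x : ∀ i, ZMod (p ^ e i)),
      (Finset.univ.filter (fun i => x i ≠ 0)).card ≤ m →
      ∃ ψ : (∀ i, ZMod (p ^ e i)) ≃+ (∀ i, ZMod (p ^ e i)), NoAbsorb p (ψ x) by
    exact h _ x le_rfl
  intro m
  induction m with
  | zero =>
    intro x hx
    refine ⟨AddEquiv.refl _, ?_⟩
    intro i j hxi _ _
    exfalso
    rw [Nat.le_zero, Finset.card_eq_zero] at hx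
    have : i ∈ Finset.univ.filter (fun i => x i ≠ 0) := by
      simp only [Finset.mem_filter, Finset.mem_univ, true_and]
      exact hxi
    rw [hx] at this
    exact absurd this (Finset.notMem_empty i)
  | succ m IH =>
    intro x hx
    by_cases hNA : NoAbsorb p x
    · exact ⟨AddEquiv.refl _, hNA⟩
    unfold NoAbsorb at hNA
    push_neg at hNA
    obtain ⟨i, j, hxi, hxj, hij, hvle, hble⟩ := hNA
    obtain ⟨ui, hdeci, hvi, hwi, hzwi⟩ := zmod_unit_decomp hp (x i) hxi
    obtain ⟨uj, hdecj, hvj, hwj, hzwj⟩ := zmod_unit_decomp hp (x j) hxj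
    set vi := padicValNat p (x i).val with hvidef
    set vj := padicValNat p (x j).val with hvjdef
    set wi := (x i).val / p ^ vi with hwidef
    set wj := (x j).val / p ^ vj with hwjdef
    have hvle' : vj ≤ vi := hvle
    have hble' : e i - vi ≤ e j - vj := hble
    -- the unit wj in `ZMod (p ^ e i)`
    have hU : IsUnit ((wj : ℕ) : ZMod (p ^ e i)) := by
      rw [ZMod.isUnit_iff_coprime]
      exact ((Nat.Prime.coprime_iff_not_dvd hp).2 hwj).symm.pow_right _
    set c : ZMod (p ^ e i) :=
      -(((p ^ (vi - vj) * wi : ℕ) : ZMod (p ^ e i)) * ↑hU.unit⁻¹) with hcdef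
    have hc : (p ^ e j) • c = 0 := by
      have h0 : ((p ^ e j * (p ^ (vi - vj) * wi) : ℕ) : ZMod (p ^ e i)) = 0 := by
        rw [ZMod.natCast_eq_zero_iff]
        have h7 : p ^ e j * (p ^ (vi - vj) * wi) = p ^ (e j + (vi - vj)) * wi := by
          rw [pow_add]; ring
        rw [h7]
        exact Dvd.dvd.mul_right (pow_dvd_pow p (by omega)) wi
      have h1 : (p ^ e j) • c
          = -(((p ^ e j * (p ^ (vi - vj) * wi) : ℕ) : ZMod (p ^ e i)) * ↑hU.unit⁻¹) := by
        rw [hcdef, nsmul_eq_mul]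
        push_cast
        ring
      rw [h1, h0, zero_mul, neg_zero]
    have hvalc : (x j).val • c = -(x i) := by
      have harith : p ^ vj * wj * (p ^ (vi - vj) * wi) = p ^ vi * wi * wj := by
        have h2 : vj + (vi - vj) = vi := by omega
        calc p ^ vj * wj * (p ^ (vi - vj) * wi) = (p ^ vj * p ^ (vi - vj)) * (wi * wj) := by ring
        _ = p ^ vi * (wi * wj) := by rw [← pow_add, h2]
        _ = p ^ vi * wi * wj := by ring
      have h1 : (x j).val • c
          = -((((x j).val * (p ^ (vi - vj) * wi) : ℕ) : ZMod (p ^ e i)) * ↑hU.unit⁻¹) := by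
        rw [hcdef, nsmul_eq_mul]
        push_cast
        ring
      rw [h1, ← hzwj, harith]
      have h3 : ((p ^ vi * wi * wj : ℕ) : ZMod (p ^ e i)) * ↑hU.unit⁻¹
          = ((p ^ vi * wi : ℕ) : ZMod (p ^ e i)) * (((wj : ℕ) : ZMod (p ^ e i)) * ↑hU.unit⁻¹) := by
        push_cast
        ring
      have h4 : ((wj : ℕ) : ZMod (p ^ e i)) * ↑hU.unit⁻¹ = 1 := hU.mul_val_inv
      rw [h3, h4, mul_one, hzwi]
      rw [ZMod.natCast_rightInverse (x i)]
    obtain ⟨ψ0, hψ0⟩ := shear_aut (n := fun k => p ^ e k) i j hij c hc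
    set y := ψ0 x with hydef
    have hyi : y i = 0 := by
      rw [hydef, (hψ0 x).2, hvalc, add_neg_cancel]
    have hyk : ∀ k, k ≠ i → y k = x k := fun k hk => (hψ0 x).1 k hk
    have hsub : (Finset.univ.filter (fun k => y k ≠ 0))
        ⊆ (Finset.univ.filter (fun k => x k ≠ 0)).erase i := by
      intro k hk
      simp only [Finset.mem_filter, Finset.mem_univ, true_and] at hk
      have hki : k ≠ i := fun h => hk (h ▸ hyi)
      rw [Finset.mem_erase]
      refine ⟨hki, ?_⟩
      simp only [Finset.mem_filter, Finset.mem_univ, true_and]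
      rw [← hyk k hki]
      exact hk
    have hcard : (Finset.univ.filter (fun k => y k ≠ 0)).card ≤ m := by
      have h5 := Finset.card_le_card hsub
      have h6 : i ∈ Finset.univ.filter (fun k => x k ≠ 0) := by
        simp only [Finset.mem_filter, Finset.mem_univ, true_and]; exact hxi
      have := Finset.card_erase_of_mem h6
      omega
    obtain ⟨ψ', hψ'⟩ := IH y hcard
    exact ⟨ψ0.trans ψ', hψ'⟩

end Phases

section PhaseB
variable {p N : ℕ} {e : Fin N → ℕ}

lemma pure_val (hp : p.Prime) {E v : ℕ} (hv : v < E) :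
    (((p ^ v : ℕ) : ZMod (p ^ E))).val = p ^ v := zmod_val_pow_cast hp hv

lemma pure_ne_zero (hp : p.Prime) {E v : ℕ} (hv : v < E) :
    ((p ^ v : ℕ) : ZMod (p ^ E)) ≠ 0 := by
  haveI : NeZero (p ^ E) := ⟨(pow_pos hp.pos _).ne'⟩
  intro h
  have := pure_val hp hv
  rw [h, ZMod.val_zero] at this
  exact (pow_pos hp.pos v).ne' this.symm

lemma vval_pure (hp : p.Prime) {E v : ℕ} (hv : v < E) :
    padicValNat p (((p ^ v : ℕ) : ZMod (p ^ E))).val = v := by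
  haveI : Fact p.Prime := ⟨hp⟩
  rw [pure_val hp hv]
  exact padicValNat.prime_pow v

lemma phaseB1 (hp : p.Prime) (x : ∀ i, ZMod (p ^ e i)) (hNA : NoAbsorb p x) :
    ∃ ψ : (∀ i, ZMod (p ^ e i)) ≃+ (∀ i, ZMod (p ^ e i)),
      PurePow p (ψ x) ∧ NoAbsorb p (ψ x) := by
  haveI : ∀ i, NeZero (p ^ e i) := fun i => ⟨(pow_pos hp.pos _).ne'⟩
  classical
  set d : ∀ k, (ZMod (p ^ e k))ˣ := fun k =>
    if h : x k = 0 then 1 else ((zmod_unit_decomp hp (x k) h).choose)⁻¹ with hd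
  obtain ⟨ψ, hψ⟩ := diag_aut (n := fun k => p ^ e k) d
  have hy : ∀ k, x k ≠ 0 → ψ x k = ((p ^ (vval p x k) : ℕ) : ZMod (p ^ e k)) := by
    intro k hk
    have spec := (zmod_unit_decomp hp (x k) hk).choose_spec
    set u := (zmod_unit_decomp hp (x k) hk).choose with hu
    rw [hψ x k, hd]
    simp only [dif_neg hk]
    have h1 : (↑u⁻¹ : ZMod (p ^ e k)) * x k
        = (↑u⁻¹ : ZMod (p ^ e k)) * (((p ^ padicValNat p (x k).val : ℕ) : ZMod (p ^ e k)) * ↑u) := by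
      rw [← spec.1]
    rw [h1, mul_comm (((p ^ padicValNat p (x k).val : ℕ) : ZMod (p ^ e k))) (↑u : ZMod (p ^ e k)),
      Units.inv_mul_cancel_left]
    rfl
  have hy0 : ∀ k, x k = 0 → ψ x k = 0 := by
    intro k hk
    rw [hψ x k, hk, mul_zero]
  have hsupp : ∀ k, ψ x k ≠ 0 ↔ x k ≠ 0 := by
    intro k
    constructor
    · intro h hk
      exact h (hy0 k hk)
    · intro hk
      rw [hy k hk]
      exact pure_ne_zero hp (zmod_unit_decomp hp (x k) hk).choose_spec.2.1
  have hvv : ∀ k, x k ≠ 0 → vval p (ψ x) k = vval p x k := by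
    intro k hk
    show padicValNat p ((ψ x) k).val = vval p x k
    rw [hy k hk]
    exact vval_pure hp ((zmod_unit_decomp hp (x k) hk).choose_spec.2.1 : vval p x k < e k)
  refine ⟨ψ, ?_, ?_⟩
  · intro k hk
    have hxk := (hsupp k).1 hk
    rw [hvv k hxk]
    exact hy k hxk
  · intro i j hyi hyj hij hcon
    have hxi := (hsupp i).1 hyi
    have hxj := (hsupp j).1 hyj
    rw [hvv i hxi, hvv j hxj] at hcon
    exact hNA i j hxi hxj hij hcon

lemma phaseB2 (hp : p.Prime) (x : ∀ i, ZMod (p ^ e i))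
    (hPP : PurePow p x) (hNA : NoAbsorb p x) :
    ∃ ψ : (∀ i, ZMod (p ^ e i)) ≃+ (∀ i, ZMod (p ^ e i)),
      PurePow p (ψ x) ∧ NoAbsorb p (ψ x) ∧ Placed p (ψ x) := by
  haveI : ∀ i, NeZero (p ^ e i) := fun i => ⟨(pow_pos hp.pos _).ne'⟩
  classical
  suffices h : ∀ (m : ℕ) (x : ∀ i, ZMod (p ^ e i)), PurePow p x → NoAbsorb p x →
      (Finset.univ.filter (fun i => x i ≠ 0 ∧ ∃ j, e j = e i ∧ ¬ j ≤ i)).card ≤ m →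
      ∃ ψ : (∀ i, ZMod (p ^ e i)) ≃+ (∀ i, ZMod (p ^ e i)),
        PurePow p (ψ x) ∧ NoAbsorb p (ψ x) ∧ Placed p (ψ x) by
    exact h _ x hPP hNA le_rfl
  clear hPP hNA x
  intro m
  induction m with
  | zero =>
    intro x hPP hNA hcard
    refine ⟨AddEquiv.refl _, hPP, hNA, ?_⟩
    intro i hxi j hej
    by_contra hji
    rw [Nat.le_zero, Finset.card_eq_zero] at hcard
    have : i ∈ Finset.univ.filter (fun i => x i ≠ 0 ∧ ∃ j, e j = e i ∧ ¬ j ≤ i) := by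
      simp only [Finset.mem_filter, Finset.mem_univ, true_and]
      exact ⟨hxi, j, hej, hji⟩
    rw [hcard] at this
    exact absurd this (Finset.notMem_empty i)
  | succ m IH =>
    intro x hPP hNA hcard
    by_cases hPl : Placed p x
    · exact ⟨AddEquiv.refl _, hPP, hNA, hPl⟩
    unfold Placed at hPl
    push_neg at hPl
    obtain ⟨i, hxi, j0, hej0, hj0i⟩ := hPl
    -- the fiber of e i and its max
    set F : Finset (Fin N) := Finset.univ.filter (fun k => e k = e i) with hF
    have hFne : F.Nonempty := ⟨i, by simp [hF]⟩
    set jm := F.max' hFne with hjm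
    have hejm : e jm = e i := by
      have := F.max'_mem hFne
      simp only [hF, Finset.mem_filter, Finset.mem_univ, true_and] at this
      exact this
    have hilt : i < jm := by
      have hj0F : j0 ∈ F := by simp [hF, hej0]
      exact lt_of_lt_of_le hj0i (F.le_max' j0 hj0F)
    have hij : i ≠ jm := Fin.ne_of_lt hilt
    have hxjm : x jm = 0 := by
      by_contra hxjm
      rcases le_total (vval p x jm) (vval p x i) with hle | hle
      · exact hNA i jm hxi hxjm hij ⟨hle, by rw [hejm]; exact Nat.sub_le_sub_left hle _⟩
      · exact hNA jm i hxjm hxi (Ne.symm hij) ⟨hle, by rw [hejm]; exact Nat.sub_le_sub_left hle _⟩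
    obtain ⟨ψ0, hψ0⟩ := swap_aut (n := fun k => p ^ e k) i jm
      (by show p ^ e i = p ^ e jm; rw [hejm])
    set y := ψ0 x with hy
    have hyi : y i = 0 := by
      rw [hy, hψ0 x i, Equiv.swap_apply_left, hxjm, ZMod.val_zero, Nat.cast_zero]
    have hyjm : y jm = (((x i).val : ℕ) : ZMod (p ^ e jm)) := by
      rw [hy, hψ0 x jm, Equiv.swap_apply_right]
    have hyl : ∀ l, l ≠ i → l ≠ jm → y l = x l := by
      intro l hl1 hl2
      rw [hy, hψ0 x l, Equiv.swap_apply_of_ne_of_ne hl1 hl2]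
      exact ZMod.natCast_rightInverse (x l)
    -- value at jm
    have hvi : vval p x i < e i := (zmod_unit_decomp hp (x i) hxi).choose_spec.2.1
    have hxival : (x i).val = p ^ vval p x i := by
      conv_lhs => rw [hPP i hxi]
      exact pure_val hp hvi
    have hyjm' : y jm = ((p ^ vval p x i : ℕ) : ZMod (p ^ e jm)) := by
      rw [hyjm, hxival]
    have hvijm : vval p x i < e jm := by rw [hejm]; exact hvi
    have hyjm0 : y jm ≠ 0 := by rw [hyjm']; exact pure_ne_zero hp hvijm
    have hvvjm : vval p y jm = vval p x i := by
      show padicValNat p (y jm).val = vval p x i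
      rw [hyjm']
      exact vval_pure hp hvijm
    -- supports
    have hsupp : ∀ k, k ≠ i → k ≠ jm → (y k ≠ 0 ↔ x k ≠ 0) := by
      intro k h1 h2
      rw [hyl k h1 h2]
    have hvvk : ∀ k, k ≠ i → k ≠ jm → vval p y k = vval p x k := by
      intro k h1 h2
      show padicValNat p (y k).val = padicValNat p (x k).val
      rw [hyl k h1 h2]
    -- translation map
    have htrans : ∀ k, y k ≠ 0 → (x (if k = jm then i else k) ≠ 0 ∧
        e (if k = jm then i else k) = e k ∧ vval p y k = vval p x (if k = jm then i else k)) := by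
      intro k hyk
      by_cases hk : k = jm
      · subst hk
        rw [if_pos rfl]
        exact ⟨hxi, hejm.symm, hvvjm⟩
      · have hki : k ≠ i := fun h => hyk (h ▸ hyi)
        rw [if_neg hk]
        exact ⟨(hsupp k hki hk).1 hyk, rfl, hvvk k hki hk⟩
    have hPPy : PurePow p y := by
      intro k hyk
      by_cases hk : k = jm
      · subst hk
        rw [hvvjm]
        exact hyjm'
      · have hki : k ≠ i := fun h => hyk (h ▸ hyi)
        rw [hvvk k hki hk, hyl k hki hk]
        exact hPP k ((hsupp k hki hk).1 hyk)
    have hNAy : NoAbsorb p y := by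
      intro k l hyk hyl' hkl hcon
      obtain ⟨hxk', hek', hvk'⟩ := htrans k hyk
      obtain ⟨hxl', hel', hvl'⟩ := htrans l hyl'
      have hne : (if k = jm then i else k) ≠ (if l = jm then i else l) := by
        have hki : k ≠ i := fun h => hyk (h ▸ hyi)
        have hli : l ≠ i := fun h => hyl' (h ▸ hyi)
        by_cases h1 : k = jm
        · have h2 : l ≠ jm := fun h => hkl (h1.trans h.symm)
          rw [if_pos h1, if_neg h2]
          exact fun h => hli h.symm
        · by_cases h2 : l = jm
          · rw [if_neg h1, if_pos h2]
            exact hki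
          · rw [if_neg h1, if_neg h2]
            exact hkl
      refine hNA _ _ hxk' hxl' hne ?_
      rw [← hvk', ← hvl', hek', hel']
      exact hcon
    have hPlacedjm : ∀ j, e j = e jm → j ≤ jm := by
      intro j hj
      refine F.le_max' j ?_
      simp [hF, hj ▸ hejm]
    -- misplaced set decreases
    have hsub : (Finset.univ.filter (fun k => y k ≠ 0 ∧ ∃ j, e j = e k ∧ ¬ j ≤ k))
        ⊆ (Finset.univ.filter (fun k => x k ≠ 0 ∧ ∃ j, e j = e k ∧ ¬ j ≤ k)).erase i := by
      intro k hk
      simp only [Finset.mem_filter, Finset.mem_univ, true_and] at hk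
      obtain ⟨hyk, j1, hj1, hj1k⟩ := hk
      have hki : k ≠ i := fun h => hyk (h ▸ hyi)
      have hkjm : k ≠ jm := by
        intro h
        subst h
        exact hj1k (hPlacedjm j1 hj1)
      rw [Finset.mem_erase]
      refine ⟨hki, ?_⟩
      simp only [Finset.mem_filter, Finset.mem_univ, true_and]
      exact ⟨(hsupp k hki hkjm).1 hyk, j1, hj1, hj1k⟩
    have hcard' : (Finset.univ.filter (fun k => y k ≠ 0 ∧ ∃ j, e j = e k ∧ ¬ j ≤ k)).card ≤ m := by
      have h5 := Finset.card_le_card hsub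
      have h6 : i ∈ Finset.univ.filter (fun k => x k ≠ 0 ∧ ∃ j, e j = e k ∧ ¬ j ≤ k) := by
        simp only [Finset.mem_filter, Finset.mem_univ, true_and]
        exact ⟨hxi, j0, hej0, not_le.mpr hj0i⟩
      have := Finset.card_erase_of_mem h6
      omega
    obtain ⟨ψ', hψ'⟩ := IH y hPPy hNAy hcard'
    exact ⟨ψ0.trans ψ', hψ'⟩

end PhaseB

section Nu
variable {G : Type*} [AddCommGroup G] {ι : Type*} [Fintype ι]

lemma nsmul_mod' {x : G} {m k : ℕ} (h : addOrderOf x ∣ k) : (m % k) • x = m • x := by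
  conv_rhs => rw [← Nat.div_add_mod m k]
  rw [add_smul, mul_comm, mul_smul]
  have : k • x = 0 := by
    obtain ⟨c, rfl⟩ := h
    rw [mul_comm, mul_smul, addOrderOf_nsmul_eq_zero, smul_zero]
  rw [this, smul_zero, zero_add]

lemma mem_nuSet_iff {p : ℕ} (hp : p.Prime) {Q : ι → G} (hQ : IsBasis Q)
    (hpow : ∀ i, ∃ E, addOrderOf (Q i) = p ^ E) (x : G) (r : ℕ) :
    (∀ q : ι → ℕ, ((∀ i, q i < addOrderOf (Q i)) ∧ x = ∑ i, q i • Q i) → ∀ i, p ^ r ∣ q i)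
      ↔ ∃ u, x = p ^ r • u := by
  haveI : ∀ i, NeZero (addOrderOf (Q i)) := fun i => by
    obtain ⟨E, hE⟩ := hpow i
    exact ⟨hE ▸ (pow_pos hp.pos E).ne'⟩
  obtain ⟨q, ⟨hq1, hq2⟩, hqu⟩ := hQ x
  constructor
  · intro h
    have hdvd := h q ⟨hq1, hq2⟩
    refine ⟨∑ i, (q i / p ^ r) • Q i, ?_⟩
    rw [Finset.smul_sum, hq2]
    refine Finset.sum_congr rfl fun i _ => ?_
    rw [smul_smul, Nat.mul_div_cancel' (hdvd i)]
  · rintro ⟨u, rfl⟩ q' ⟨hq1', hq2'⟩ i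
    obtain ⟨b, ⟨hb1, hb2⟩, _⟩ := hQ u
    have hx2 : p ^ r • u = ∑ i, ((p ^ r * b i) % addOrderOf (Q i)) • Q i := by
      rw [hb2, Finset.smul_sum]
      exact Finset.sum_congr rfl fun i _ => by rw [nsmul_mod' dvd_rfl, smul_smul]
    have hqe : q' = fun i => (p ^ r * b i) % addOrderOf (Q i) := by
      rw [hqu q' ⟨hq1', hq2'⟩, hqu _ ⟨fun i => Nat.mod_lt _ (Nat.pos_of_ne_zero (NeZero.ne _)), hx2⟩]
    obtain ⟨E, hE⟩ := hpow i
    have hdvd : p ^ min r E ∣ q' i := by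
      rw [hqe]
      simp only [hE]
      rw [Nat.dvd_mod_iff (pow_dvd_pow p (min_le_right r E))]
      exact dvd_mul_of_dvd_left (pow_dvd_pow p (min_le_left r E)) _
    rcases le_or_gt r E with hle | hlt
    · rwa [min_eq_left hle] at hdvd
    · have hz : q' i = 0 := by
        rw [min_eq_right hlt.le] at hdvd
        exact Nat.eq_zero_of_dvd_of_lt hdvd (by rw [← hE]; exact hq1' i)
      simp [hz]

end Nu

section Nu2
variable {G : Type*} [AddCommGroup G] {ι : Type*} [Fintype ι]

lemma nuP_le_iff {p : ℕ} (hp : p.Prime) {Q : ι → G} (hQ : IsBasis Q)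
    (hpow : ∀ i, ∃ E, addOrderOf (Q i) = p ^ E) (x : G) (r : ℕ) :
    ((r : ℕ∞) ≤ nuP p Q x) ↔ ∃ u, x = p ^ r • u := by
  constructor
  · intro h
    rcases Nat.eq_zero_or_pos r with rfl | hr
    · exact ⟨x, by simp⟩
    by_contra hno
    have hlt : ∀ s ∈ {s : ℕ | ∀ q : ι → ℕ,
        ((∀ i, q i < addOrderOf (Q i)) ∧ x = ∑ i, q i • Q i) → ∀ i, p ^ s ∣ q i}, s ≤ r - 1 := by
      intro s hs
      obtain ⟨u, hu⟩ := (mem_nuSet_iff hp hQ hpow x s).1 hs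
      by_contra hsr
      push_neg at hsr
      have hrs : r ≤ s := by omega
      refine hno ⟨p ^ (s - r) • u, ?_⟩
      rw [hu, smul_smul, ← pow_add, Nat.add_sub_cancel' hrs]
    have : nuP p Q x ≤ ((r - 1 : ℕ) : ℕ∞) := by
      refine sSup_le ?_
      rintro a ⟨s, hs, rfl⟩
      exact_mod_cast hlt s hs
    have := h.trans this
    rw [Nat.cast_le] at this
    omega
  · intro h
    refine le_sSup ⟨r, (mem_nuSet_iff hp hQ hpow x r).2 h, rfl⟩

lemma hdvd_iff_of_nuP_eq {p : ℕ} (hp : p.Prime) {Q : ι → G} (hQ : IsBasis Q)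
    (hpow : ∀ i, ∃ E, addOrderOf (Q i) = p ^ E) {x y : G}
    (h : nuP p Q x = nuP p Q y) (r : ℕ) :
    (∃ u, x = p ^ r • u) ↔ ∃ u, y = p ^ r • u := by
  rw [← nuP_le_iff hp hQ hpow x r, ← nuP_le_iff hp hQ hpow y r, h]

end Nu2

section Unique
variable {p N : ℕ} {e : Fin N → ℕ}

lemma mypi_dvd_iff (z : ∀ i, ZMod (p ^ e i)) (r : ℕ) :
    (∃ u : ∀ i, ZMod (p ^ e i), z = p ^ r • u) ↔ ∀ i, ∃ c, z i = p ^ r • c := by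
  constructor
  · rintro ⟨u, rfl⟩ i
    exact ⟨u i, rfl⟩
  · intro h
    refine ⟨fun i => (h i).choose, ?_⟩
    funext i
    exact (h i).choose_spec

lemma coord_dvd_iff (hp : p.Prime) {E v : ℕ} (hv : v < E) (j r : ℕ) :
    (∃ c : ZMod (p ^ E), p ^ j • ((p ^ v : ℕ) : ZMod (p ^ E)) = p ^ r • c)
      ↔ (j < E - v → r ≤ v + j) := by
  haveI : NeZero (p ^ E) := ⟨(pow_pos hp.pos _).ne'⟩
  rw [zmod_pow_dvd_iff hp]
  have hsmul : p ^ j • ((p ^ v : ℕ) : ZMod (p ^ E)) = ((p ^ (j + v) : ℕ) : ZMod (p ^ E)) := by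
    rw [nsmul_eq_mul, ← Nat.cast_mul, ← pow_add]
  rw [hsmul, ZMod.val_natCast]
  by_cases hj : j + v < E
  · rw [Nat.mod_eq_of_lt (Nat.pow_lt_pow_right hp.one_lt hj),
      Nat.pow_dvd_pow_iff_le_right hp.one_lt]
    constructor
    · intro h _
      omega
    · intro h
      have := h (by omega)
      omega
  · have h0 : p ^ (j + v) % p ^ E = 0 :=
      Nat.mod_eq_zero_of_dvd (pow_dvd_pow p (by omega))
    rw [h0]
    constructor
    · intro _ hcond
      omega
    · intro _
      exact dvd_zero _

lemma pure_dvd_iff (hp : p.Prime) (x : ∀ i, ZMod (p ^ e i)) (hxP : PurePow p x) (j r : ℕ) :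
    (∃ u : ∀ i, ZMod (p ^ e i), p ^ j • x = p ^ r • u)
      ↔ ∀ i, x i ≠ 0 → j < e i - vval p x i → r ≤ vval p x i + j := by
  haveI : ∀ i, NeZero (p ^ e i) := fun i => ⟨(pow_pos hp.pos _).ne'⟩
  rw [mypi_dvd_iff]
  refine forall_congr' fun i => ?_
  by_cases hxi : x i = 0
  · have h0 : (p ^ j • x) i = 0 := by rw [Pi.smul_apply, hxi, smul_zero]
    rw [h0]
    constructor
    · intro _ h'
      exact absurd hxi h'.elim
    · intro _
      exact ⟨0, by rw [smul_zero]⟩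
  · have hv : vval p x i < e i := (zmod_unit_decomp hp (x i) hxi).choose_spec.2.1
    have h1 : (p ^ j • x) i = p ^ j • ((p ^ vval p x i : ℕ) : ZMod (p ^ e i)) := by
      rw [Pi.smul_apply, ← hxP i hxi]
    rw [h1, coord_dvd_iff hp hv j r]
    constructor
    · intro h _ hb
      exact h hb
    · intro h hb
      exact h hxi hb

lemma pure_ord (hp : p.Prime) (x : ∀ i, ZMod (p ^ e i)) (hxP : PurePow p x) :
    addOrderOf x
      = p ^ ((Finset.univ.filter (fun i => x i ≠ 0)).sup (fun i => e i - vval p x i)) := by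
  haveI : ∀ i, NeZero (p ^ e i) := fun i => ⟨(pow_pos hp.pos _).ne'⟩
  classical
  set S := Finset.univ.filter (fun i => x i ≠ 0) with hS
  rcases S.eq_empty_or_nonempty with hemp | hne
  · have hx0 : x = 0 := by
      funext i
      rw [Pi.zero_apply]
      by_contra hxi
      have : i ∈ S := by simp [hS, hxi]
      rw [hemp] at this
      exact absurd this (Finset.notMem_empty i)
    rw [hx0, hemp, addOrderOf_zero, Finset.sup_empty]
    rfl
  · set B := S.sup (fun i => e i - vval p x i) with hB
    refine ord_eq_pow hp ?_ ?_
    · funext i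
      rw [Pi.smul_apply, Pi.zero_apply]
      by_cases hxi : x i = 0
      · rw [hxi, smul_zero]
      · have hv : vval p x i < e i := (zmod_unit_decomp hp (x i) hxi).choose_spec.2.1
        have hbi : e i - vval p x i ≤ B := by
          exact Finset.le_sup (f := fun i => e i - vval p x i) (by simp [hS, hxi])
        rw [hxP i hxi, zmod_pow_smul_eq_zero_iff hp]
        omega
    · intro l hl
      obtain ⟨i0, hi0S, hi0⟩ := Finset.exists_mem_eq_sup S hne (fun i => e i - vval p x i)
      have hxi0 : x i0 ≠ 0 := by
        simp only [hS, Finset.mem_filter, Finset.mem_univ, true_and] at hi0S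
        exact hi0S
      intro hcon
      have := congrFun hcon i0
      rw [Pi.smul_apply, Pi.zero_apply, hxP i0 hxi0, zmod_pow_smul_eq_zero_iff hp] at this
      omega

lemma noabsorb_tri (x : ∀ i, ZMod (p ^ e i)) (hNA : NoAbsorb p x) {i j : Fin N}
    (hi : x i ≠ 0) (hj : x j ≠ 0) (hij : i ≠ j) :
    (vval p x i < vval p x j ↔ e i - vval p x i < e j - vval p x j) := by
  constructor
  · intro h
    by_contra hb
    exact hNA j i hj hi hij.symm ⟨h.le, not_lt.1 hb⟩
  · intro h
    by_contra hv
    exact hNA i j hi hj hij ⟨not_lt.1 hv, h.le⟩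

lemma noabsorb_b_inj (x : ∀ i, ZMod (p ^ e i)) (hNA : NoAbsorb p x) {i j : Fin N}
    (hi : x i ≠ 0) (hj : x j ≠ 0)
    (hb : e i - vval p x i = e j - vval p x j) : i = j := by
  by_contra hij
  rcases lt_trichotomy (vval p x i) (vval p x j) with h | h | h
  · have := (noabsorb_tri x hNA hi hj hij).1 h
    omega
  · exact hNA i j hi hj hij ⟨h.ge, hb.le⟩
  · have := (noabsorb_tri x hNA hj hi (Ne.symm hij)).1 h
    omega

end Unique

section Unique2
variable {p N : ℕ} {e : Fin N → ℕ}

lemma exists_partner (hp : p.Prime) {E : ℕ} (x y : ∀ i, ZMod (p ^ e i))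
    (hxN : NoAbsorb p x)
    (hvx : ∀ i, x i ≠ 0 → vval p x i < e i)
    (hBx : (Finset.univ.filter (fun i => x i ≠ 0)).sup (fun i => e i - vval p x i) = E)
    (hBy : (Finset.univ.filter (fun i => y i ≠ 0)).sup (fun i => e i - vval p y i) = E)
    (hSy : ∃ i, y i ≠ 0)
    (hD : ∀ j, j < E → ∀ r,
      ((∀ i, x i ≠ 0 → j < e i - vval p x i → r ≤ vval p x i + j) ↔
       (∀ i, y i ≠ 0 → j < e i - vval p y i → r ≤ vval p y i + j)))
    (k : Fin N) (hk : x k ≠ 0) :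
    ∃ k', y k' ≠ 0 ∧ vval p y k' = vval p x k ∧ e k' - vval p y k' = e k - vval p x k := by
  classical
  set a := vval p x k with ha
  set b := e k - a with hb
  have hb1 : 1 ≤ b := by have := hvx k hk; omega
  have hbE : b ≤ E := by
    rw [← hBx]
    exact Finset.le_sup (f := fun i => e i - vval p x i) (by simp [hk])
  set j := b - 1 with hj
  have hjE : j < E := by omega
  have hDx : ∀ r, (∀ i, x i ≠ 0 → j < e i - vval p x i → r ≤ vval p x i + j) ↔ r ≤ a + j := by
    intro r
    constructor
    · intro h
      exact h k hk (by omega)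
    · intro hr i hi hji
      rcases eq_or_ne i k with rfl | hik
      · exact hr
      · have hbi : b ≤ e i - vval p x i := by omega
        rcases lt_or_eq_of_le hbi with hlt | heq
        · have hav : a < vval p x i := by
            have := (noabsorb_tri x hxN hk hi (Ne.symm hik)).2 (by omega)
            omega
          omega
        · exact absurd (noabsorb_b_inj x hxN hi hk (by omega)) hik
  have hDy : ∀ r, (∀ i, y i ≠ 0 → j < e i - vval p y i → r ≤ vval p y i + j) ↔ r ≤ a + j :=
    fun r => (hD j hjE r).symm.trans (hDx r)
  -- nonempty active set in y
  obtain ⟨iy, hiy⟩ := hSy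
  have hSyne : (Finset.univ.filter (fun i => y i ≠ 0)).Nonempty := ⟨iy, by simp [hiy]⟩
  obtain ⟨i0, hi0S, hi0⟩ := Finset.exists_mem_eq_sup
    (Finset.univ.filter (fun i => y i ≠ 0)) hSyne (fun i => e i - vval p y i)
  have hyi0 : y i0 ≠ 0 := by
    simp only [Finset.mem_filter, Finset.mem_univ, true_and] at hi0S
    exact hi0S
  have hi0E : e i0 - vval p y i0 = E := by rw [← hBy, hi0]
  set T := Finset.univ.filter (fun i => y i ≠ 0 ∧ j < e i - vval p y i) with hT
  have hTne : T.Nonempty := by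
    refine ⟨i0, ?_⟩
    simp only [hT, Finset.mem_filter, Finset.mem_univ, true_and]
    exact ⟨hyi0, by omega⟩
  obtain ⟨k', hk'T, hmin⟩ := T.exists_min_image (fun i => vval p y i) hTne
  simp only [hT, Finset.mem_filter, Finset.mem_univ, true_and] at hk'T
  obtain ⟨hyk', hjk'⟩ := hk'T
  -- vval p y k' = a
  have hc1a : vval p y k' ≤ a := by
    have hDyh : ∀ i, y i ≠ 0 → j < e i - vval p y i → vval p y k' + j ≤ vval p y i + j := by
      intro i hi hji
      have : k' ∈ T → i ∈ T → vval p y k' ≤ vval p y i := fun _ hiT => hmin i hiT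
      have hiT : i ∈ T := by
        simp only [hT, Finset.mem_filter, Finset.mem_univ, true_and]
        exact ⟨hi, hji⟩
      have := hmin i hiT
      omega
    have := (hDy (vval p y k' + j)).1 hDyh
    omega
  have hc1b : a ≤ vval p y k' := by
    have hDyh := (hDy (a + j)).2 le_rfl
    have := hDyh k' hyk' hjk'
    omega
  have hva : vval p y k' = a := le_antisymm hc1a hc1b
  -- e k' - vval p y k' = b
  have hc2a : b ≤ e k' - vval p y k' := by omega
  have hc2b : e k' - vval p y k' ≤ b := by
    by_contra hgt
    push_neg at hgt
    have hbk'E : e k' - vval p y k' ≤ E := by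
      rw [← hBy]
      exact Finset.le_sup (f := fun i => e i - vval p y i) (by simp [hyk'])
    have hbltE : b < E := by omega
    have hDxb : ∀ i, x i ≠ 0 → b < e i - vval p x i → a + 1 + b ≤ vval p x i + b := by
      intro i hi hbi
      have hik : i ≠ k := by
        intro hik
        subst hik
        omega
      have := (noabsorb_tri x hxN hk hi (Ne.symm hik)).2 (by omega)
      omega
    have hDyb := (hD b hbltE (a + 1 + b)).1 hDxb
    have := hDyb k' hyk' (by omega)
    omega
  exact ⟨k', hyk', hva, by omega⟩

lemma reduced_unique (hp : p.Prime) (x y : ∀ i, ZMod (p ^ e i))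
    (hxP : PurePow p x) (hxN : NoAbsorb p x) (hxL : Placed p x)
    (hyP : PurePow p y) (hyN : NoAbsorb p y) (hyL : Placed p y)
    {E : ℕ} (hxE : addOrderOf x = p ^ E) (hyE : addOrderOf y = p ^ E)
    (hdvd : ∀ j, j < E → ∀ r,
      ((∃ u, p ^ j • x = p ^ r • u) ↔ ∃ u, p ^ j • y = p ^ r • u)) :
    x = y := by
  classical
  haveI : ∀ i, NeZero (p ^ e i) := fun i => ⟨(pow_pos hp.pos _).ne'⟩
  have hvx : ∀ i, x i ≠ 0 → vval p x i < e i :=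
    fun i hi => (zmod_unit_decomp hp (x i) hi).choose_spec.2.1
  have hvy : ∀ i, y i ≠ 0 → vval p y i < e i :=
    fun i hi => (zmod_unit_decomp hp (y i) hi).choose_spec.2.1
  have hBx : (Finset.univ.filter (fun i => x i ≠ 0)).sup (fun i => e i - vval p x i) = E := by
    have h := pure_ord hp x hxP
    rw [hxE] at h
    exact (Nat.pow_right_injective hp.two_le h).symm
  have hBy : (Finset.univ.filter (fun i => y i ≠ 0)).sup (fun i => e i - vval p y i) = E := by
    have h := pure_ord hp y hyP
    rw [hyE] at h
    exact (Nat.pow_right_injective hp.two_le h).symm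
  rcases Nat.eq_zero_or_pos E with rfl | hE1
  · have hx0 : x = 0 := by
      rw [← AddMonoid.addOrderOf_eq_one_iff, hxE, pow_zero]
    have hy0 : y = 0 := by
      rw [← AddMonoid.addOrderOf_eq_one_iff, hyE, pow_zero]
    rw [hx0, hy0]
  have hSx : ∃ i, x i ≠ 0 := by
    by_contra hno
    push_neg at hno
    have : x = 0 := funext fun i => by rw [hno i]; rfl
    rw [this, addOrderOf_zero] at hxE
    exact (ne_of_lt (Nat.one_lt_pow hE1.ne' hp.one_lt)) hxE
  have hSy : ∃ i, y i ≠ 0 := by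
    by_contra hno
    push_neg at hno
    have : y = 0 := funext fun i => by rw [hno i]; rfl
    rw [this, addOrderOf_zero] at hyE
    exact (ne_of_lt (Nat.one_lt_pow hE1.ne' hp.one_lt)) hyE
  have hD : ∀ j, j < E → ∀ r,
      ((∀ i, x i ≠ 0 → j < e i - vval p x i → r ≤ vval p x i + j) ↔
       (∀ i, y i ≠ 0 → j < e i - vval p y i → r ≤ vval p y i + j)) := by
    intro j hj r
    rw [← pure_dvd_iff hp x hxP j r, ← pure_dvd_iff hp y hyP j r]
    exact hdvd j hj r
  have hD' : ∀ j, j < E → ∀ r,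
      ((∀ i, y i ≠ 0 → j < e i - vval p y i → r ≤ vval p y i + j) ↔
       (∀ i, x i ≠ 0 → j < e i - vval p x i → r ≤ vval p x i + j)) :=
    fun j hj r => (hD j hj r).symm
  have hmatch : ∀ k, x k ≠ 0 → y k ≠ 0 ∧ y k = x k := by
    intro k hk
    obtain ⟨k', hy', hva, hvb⟩ := exists_partner hp x y hxN hvx hBx hBy hSy hD k hk
    have hek : e k' = e k := by
      have h1 := hvx k hk
      have h2 := hvy k' hy'
      omega
    have hkk : k' = k := le_antisymm (hxL k hk k' hek) (hyL k' hy' k hek.symm)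
    subst hkk
    refine ⟨hy', ?_⟩
    rw [hyP k' hy', hxP k' hk, hva]
  have hmatch' : ∀ k, y k ≠ 0 → x k ≠ 0 ∧ x k = y k := by
    intro k hk
    obtain ⟨k', hx', hva, hvb⟩ := exists_partner hp y x hyN hvy hBy hBx hSx hD' k hk
    have hek : e k' = e k := by
      have h1 := hvy k hk
      have h2 := hvx k' hx'
      omega
    have hkk : k' = k := le_antisymm (hyL k hk k' hek) (hxL k' hx' k hek.symm)
    subst hkk
    refine ⟨hx', ?_⟩
    rw [hyP k' hk, hxP k' hx', hva]
  funext k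
  by_cases hk : x k = 0
  · by_cases hyk : y k = 0
    · rw [hk, hyk]
    · exact absurd (hmatch' k hyk).1 (not_not.2 hk)
  · exact (hmatch k hk).2.symm

end Unique2

section Glue

lemma hdvd_equiv {A B : Type*} [AddCommGroup A] [AddCommGroup B] (φ : A ≃+ B) (a : A) (c : ℕ) :
    (∃ u, a = c • u) ↔ (∃ u, φ a = c • u) := by
  constructor
  · rintro ⟨u, rfl⟩
    exact ⟨φ u, by rw [map_nsmul]⟩
  · rintro ⟨u, hu⟩
    refine ⟨φ.symm u, ?_⟩
    have := congrArg φ.symm hu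
    rwa [φ.symm_apply_apply, map_nsmul] at this

theorem existence_sufficient' {G : Type*} [AddCommGroup G] [Fintype G]
    {p : ℕ} (hp : p.Prime) (hG : ∀ g : G, ∃ k : ℕ, p ^ k • g = 0)
    {N : ℕ} (Q : Fin N → G) (hQ : IsBasis Q)
    (K : G) (e : ℕ) (hordK : addOrderOf K = p ^ e)
    (m : Fin N → ℕ)
    (h1 : addOrderOf K = addOrderOf (∑ i, m i • Q i))
    (h2 : ∀ j : ℕ, j < e → nuP p Q (p ^ j • K) = nuP p Q (p ^ j • ∑ i, m i • Q i)) :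
    ∃ P : Fin N → G, IsBasis P ∧ (∀ i, addOrderOf (P i) = addOrderOf (Q i)) ∧
      K = ∑ i, m i • P i := by
  classical
  have hpow : ∀ i, ∃ E, addOrderOf (Q i) = p ^ E := by
    intro i
    obtain ⟨k, hk⟩ := hG (Q i)
    obtain ⟨E, _, hE⟩ := (Nat.dvd_prime_pow hp).1 (addOrderOf_dvd_of_nsmul_eq_zero hk)
    exact ⟨E, hE⟩
  set en : Fin N → ℕ := fun i => (hpow i).choose with hen_def
  have hen : ∀ i, addOrderOf (Q i) = p ^ en i := fun i => (hpow i).choose_spec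
  haveI : ∀ i, NeZero (p ^ en i) := fun i => ⟨(pow_pos hp.pos _).ne'⟩
  set eqv := basisEquiv (n := fun i => p ^ en i) hQ hen with heqv
  set L := ∑ i, m i • Q i with hL
  set xK := eqv.symm K with hxK
  set xL := eqv.symm L with hxL
  -- invariants on the M-side
  have hordxK : addOrderOf xK = p ^ e := by rw [hxK, addOrderOf_equiv, hordK]
  have hordxL : addOrderOf xL = p ^ e := by rw [hxL, addOrderOf_equiv, ← h1, hordK]
  have h2' : ∀ j, j < e → ∀ r, ((∃ u, p ^ j • xK = p ^ r • u) ↔ (∃ u, p ^ j • xL = p ^ r • u)) := by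
    intro j hj r
    have hKs : p ^ j • xK = eqv.symm (p ^ j • K) := by rw [map_nsmul]
    have hLs : p ^ j • xL = eqv.symm (p ^ j • L) := by rw [map_nsmul]
    rw [hKs, hLs, ← hdvd_equiv eqv.symm (p ^ j • K) (p ^ r),
      ← hdvd_equiv eqv.symm (p ^ j • L) (p ^ r)]
    exact hdvd_iff_of_nuP_eq hp hQ hpow (h2 j hj) r
  -- reduce both sides
  obtain ⟨ψ1, hψ1⟩ := phaseA hp xK
  obtain ⟨ψ2, hψ2⟩ := phaseB1 hp (ψ1 xK) hψ1
  obtain ⟨ψ3, hψ3⟩ := phaseB2 hp (ψ2 (ψ1 xK)) hψ2.1 hψ2.2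
  set Ψx := ψ1.trans (ψ2.trans ψ3) with hΨx
  have hΨxval : Ψx xK = ψ3 (ψ2 (ψ1 xK)) := rfl
  obtain ⟨χ1, hχ1⟩ := phaseA hp xL
  obtain ⟨χ2, hχ2⟩ := phaseB1 hp (χ1 xL) hχ1
  obtain ⟨χ3, hχ3⟩ := phaseB2 hp (χ2 (χ1 xL)) hχ2.1 hχ2.2
  set Ψy := χ1.trans (χ2.trans χ3) with hΨy
  have hΨyval : Ψy xL = χ3 (χ2 (χ1 xL)) := rfl
  set zx := Ψx xK with hzx
  set zy := Ψy xL with hzy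
  have hordzx : addOrderOf zx = p ^ e := by rw [hzx, addOrderOf_equiv, hordxK]
  have hordzy : addOrderOf zy = p ^ e := by rw [hzy, addOrderOf_equiv, hordxL]
  have h2'' : ∀ j, j < e → ∀ r,
      ((∃ u, p ^ j • zx = p ^ r • u) ↔ (∃ u, p ^ j • zy = p ^ r • u)) := by
    intro j hj r
    have h3 : p ^ j • zx = Ψx (p ^ j • xK) := by rw [map_nsmul, hzx]
    have h4 : p ^ j • zy = Ψy (p ^ j • xL) := by rw [map_nsmul, hzy]
    rw [h3, h4, ← hdvd_equiv Ψx (p ^ j • xK) (p ^ r), ← hdvd_equiv Ψy (p ^ j • xL) (p ^ r)]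
    exact h2' j hj r
  have hzeq : zx = zy := by
    refine reduced_unique hp zx zy ?_ ?_ ?_ ?_ ?_ ?_ hordzx hordzy h2''
    · exact hΨxval ▸ hψ3.1
    · exact hΨxval ▸ hψ3.2.1
    · exact hΨxval ▸ hψ3.2.2
    · exact hΨyval ▸ hχ3.1
    · exact hΨyval ▸ hχ3.2.1
    · exact hΨyval ▸ hχ3.2.2
  -- assemble the automorphism
  set φ : G ≃+ G := (eqv.symm.trans (Ψy.trans (Ψx.symm.trans eqv))) with hφ
  have hφL : φ L = K := by
    have h5 : Ψy (eqv.symm L) = Ψx (eqv.symm K) := hzeq.symm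
    have h6 : φ L = eqv (Ψx.symm (Ψy (eqv.symm L))) := rfl
    rw [h6, h5, AddEquiv.symm_apply_apply, AddEquiv.apply_symm_apply]
  refine ⟨fun i => φ (Q i), isBasis_comp_equiv hQ φ, fun i => addOrderOf_equiv φ (Q i), ?_⟩
  rw [← hφL, hL, map_sum]
  refine Finset.sum_congr rfl fun i _ => ?_
  rw [map_nsmul]

end Glue

/-- Existence theorem, sufficiency: if `|K| = |∑ m i • Q i|` and
`ν_p (p^j • K) = ν_p (p^j • ∑ m i • Q i)` for all `0 ≤ j < e` (where `|K| = p ^ e`),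
then there is a basis `P` with `|P i| = |Q i|` and `K = ∑ m i • P i`. -/
theorem existence_sufficient {G : Type*} [AddCommGroup G] [Fintype G]
    {p : ℕ} (hp : p.Prime) (hG : ∀ g : G, ∃ k : ℕ, p ^ k • g = 0)
    {N : ℕ} (Q : Fin N → G) (hQ : IsBasis Q)
    (hQsorted : Monotone fun i => addOrderOf (Q i))
    (K : G) (e : ℕ) (hordK : addOrderOf K = p ^ e)
    (m : Fin N → ℕ) (hm : ∀ i, m i < addOrderOf (Q i))
    (h1 : addOrderOf K = addOrderOf (∑ i, m i • Q i))
    (h2 : ∀ j : ℕ, j < e → nuP p Q (p ^ j • K) = nuP p Q (p ^ j • ∑ i, m i • Q i)) :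
    ∃ P : Fin N → G, IsBasis P ∧ (∀ i, addOrderOf (P i) = addOrderOf (Q i)) ∧
      K = ∑ i, m i • P i := by
  exact existence_sufficient' hp hG Q hQ K e hordK m h1 h2
end

section
/- Let G be a finite Abelian p-group with sorted basis {Q_1,...,Q_N}, and consider a root extraction problem with data K in G and multipliers m_1,...,m_N, with r = nu_p(K) and nu_p(K) = nu_p(sum m_i Q_i). Write K = p^r K' and m_i = p^r m_i' (choosing K' with coefficients q_i' such that q_i = p^r q_i' and q_i' = 0 whenever q_i = 0, and m_i' = 0 whenever m_i = 0). Then there exists a basis {P_i} with K = sum m_i P_i if and only if there exists a basis {P_i'} with K' = sum m_i' P_i'. -/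
section helpers
variable {G : Type*} [AddCommGroup G] {ι : Type*} [Fintype ι]

lemma nsmul_congr {x : G} {n a b : ℕ} (hx : n • x = 0) (hab : a ≡ b [MOD n]) :
    a • x = b • x := by
  have h : ∀ c : ℕ, c • x = (c % n) • x := by
    intro c
    conv_lhs => rw [← Nat.mod_add_div c n]
    rw [add_nsmul, mul_nsmul, hx, smul_zero, add_zero]
  rw [h a, h b]
  exact congrArg (fun c : ℕ => c • x) hab

variable {Q : ι → G}

noncomputable def bcoord (hQ : IsBasis Q) (g : G) : ι → ℕ :=
  (hQ g).exists.choose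

lemma bcoord_lt (hQ : IsBasis Q) (g : G) (i : ι) :
    bcoord hQ g i < addOrderOf (Q i) := (hQ g).exists.choose_spec.1 i

lemma bcoord_sum (hQ : IsBasis Q) (g : G) : g = ∑ i, bcoord hQ g i • Q i :=
  (hQ g).exists.choose_spec.2

lemma bcoord_unique (hQ : IsBasis Q) {g : G} {b : ι → ℕ}
    (hlt : ∀ i, b i < addOrderOf (Q i)) (hsum : g = ∑ i, b i • Q i) :
    b = bcoord hQ g :=
  (hQ g).unique ⟨hlt, hsum⟩ ⟨bcoord_lt hQ g, bcoord_sum hQ g⟩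

lemma bcoord_eq_mod [Finite G] (hQ : IsBasis Q) {g : G} {a : ι → ℕ}
    (h : g = ∑ i, a i • Q i) (i : ι) :
    bcoord hQ g i = a i % addOrderOf (Q i) := by
  have h2 : g = ∑ i, (a i % addOrderOf (Q i)) • Q i := by
    rw [h]
    exact Finset.sum_congr rfl fun i _ =>
      nsmul_congr (addOrderOf_nsmul_eq_zero (Q i)) (Nat.mod_modEq _ _).symm
  have := bcoord_unique hQ (fun i => Nat.mod_lt _ (addOrderOf_pos _)) h2
  exact (congrFun this i).symm

lemma card_eq_prod [DecidableEq ι] [Fintype G] (hQ : IsBasis Q) :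
    Fintype.card G = ∏ i, addOrderOf (Q i) := by
  have hbij : Function.Bijective
      (fun b : (∀ i, Fin (addOrderOf (Q i))) => ∑ i, (b i).1 • Q i) := by
    constructor
    · intro b c h
      have h' : (∑ i, ((b i : ℕ)) • Q i) = ∑ i, ((c i : ℕ)) • Q i := h
      have hb := bcoord_unique hQ (g := ∑ i, ((b i : ℕ)) • Q i)
        (b := fun i => (b i).1) (fun i => (b i).2) rfl
      have hc := bcoord_unique hQ (g := ∑ i, ((b i : ℕ)) • Q i)
        (b := fun i => (c i).1) (fun i => (c i).2) h'
      funext i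
      exact Fin.ext ((congrFun hb i).trans (congrFun hc i).symm)
    · intro g
      exact ⟨fun i => ⟨bcoord hQ g i, bcoord_lt hQ g i⟩, (bcoord_sum hQ g).symm⟩
  rw [← Fintype.card_of_bijective hbij]
  simp

lemma rep_aux (P : ι → G) (b d : ι → ℕ) (k : ℕ) :
    (∑ i, b i • P i) + k • (∑ i, d i • P i) = ∑ i, (b i + k * d i) • P i := by
  rw [Finset.smul_sum, ← Finset.sum_add_distrib]
  exact Finset.sum_congr rfl fun i _ => by rw [add_nsmul, smul_smul]

lemma sum_smul_update {N : ℕ} (P : Fin N → G) (j : Fin N) (x : G) (b : Fin N → ℕ) :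
    ∑ i, b i • Function.update P j (P j + x) i = (∑ i, b i • P i) + (b j) • x := by
  have hfun : (fun i => b i • Function.update P j (P j + x) i) =
      Function.update (fun i => b i • P i) j (b j • P j + b j • x) := by
    funext i
    rcases eq_or_ne i j with rfl | h
    · simp [smul_add]
    · simp [Function.update_of_ne h]
  rw [hfun, Finset.sum_update_of_mem (Finset.mem_univ j)]
  rw [Finset.sum_eq_sum_sdiff_singleton_add (Finset.mem_univ j) (fun i => b i • P i)]
  abel

end helpers

section key
variable {G : Type*} [AddCommGroup G] [Fintype G] {N : ℕ} {P : Fin N → G}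

lemma isBasis_update (hP : IsBasis P) (j : Fin N) (D : G) (u : ℕ)
    (hord : addOrderOf (P j + u • D) = addOrderOf (P j))
    (hunit : IsUnit ((1 + u * bcoord hP D j : ℕ) : ZMod (addOrderOf (P j)))) :
    IsBasis (Function.update P j (P j + u • D)) := by
  classical
  set P' := Function.update P j (P j + u • D) with hP'
  set d : Fin N → ℕ := bcoord hP D with hd
  have hordP' : ∀ i, addOrderOf (P' i) = addOrderOf (P i) := by
    intro i
    rcases eq_or_ne i j with rfl | h
    · simpa [hP'] using hord
    · simp [hP', Function.update_of_ne h]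
  -- representation of any combination of P' in terms of P
  have key : ∀ b : Fin N → ℕ,
      ∑ i, b i • P' i = ∑ i, (b i + b j * u * d i) • P i := by
    intro b
    rw [hP', sum_smul_update P j (u • D) b, smul_smul]
    have hDrep := bcoord_sum hP D
    calc (∑ i, b i • P i) + (b j * u) • D
        = (∑ i, b i • P i) + (b j * u) • (∑ i, d i • P i) := by rw [← hDrep]
      _ = ∑ i, (b i + b j * u * d i) • P i := by
          rw [rep_aux]
  -- injectivity
  have inj : ∀ b c : Fin N → ℕ, (∀ i, b i < addOrderOf (P i)) →
      (∀ i, c i < addOrderOf (P i)) →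
      (∑ i, b i • P' i) = (∑ i, c i • P' i) → b = c := by
    intro b c hb hc h
    have hmods : ∀ i, (b i + b j * u * d i) % addOrderOf (P i)
        = (c i + c j * u * d i) % addOrderOf (P i) := by
      intro i
      have h1 := bcoord_eq_mod hP (key b) i
      have h2 := bcoord_eq_mod hP (h.trans (key c)) i
      exact h1.symm.trans h2
    have hbcj : b j = c j := by
      have hmod : ((b j + b j * u * d j : ℕ) : ZMod (addOrderOf (P j)))
          = ((c j + c j * u * d j : ℕ) : ZMod (addOrderOf (P j))) :=
        (ZMod.natCast_eq_natCast_iff _ _ _).mpr (hmods j)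
      have hmul : ((b j : ℕ) : ZMod (addOrderOf (P j))) * ((1 + u * d j : ℕ) : ZMod (addOrderOf (P j)))
          = ((c j : ℕ) : ZMod (addOrderOf (P j))) * ((1 + u * d j : ℕ) : ZMod (addOrderOf (P j))) := by
        push_cast at hmod ⊢
        linear_combination hmod
      have := hunit.mul_right_cancel hmul
      have hcast := (ZMod.natCast_eq_natCast_iff _ _ _).mp this
      have h3 : b j % addOrderOf (P j) = c j % addOrderOf (P j) := hcast
      rwa [Nat.mod_eq_of_lt (hb j), Nat.mod_eq_of_lt (hc j)] at h3
    funext i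
    have : Nat.ModEq (addOrderOf (P i)) (b i + b j * u * d i) (c i + c j * u * d i) := hmods i
    rw [hbcj] at this
    have h4 := this.add_right_cancel' (c j * u * d i)
    have h5 : b i % addOrderOf (P i) = c i % addOrderOf (P i) := h4
    rwa [Nat.mod_eq_of_lt (hb i), Nat.mod_eq_of_lt (hc i)] at h5
  -- surjectivity via counting
  have hbij : Function.Bijective
      (fun b : (∀ i, Fin (addOrderOf (P i))) => ∑ i, (b i).1 • P' i) := by
    rw [Fintype.bijective_iff_injective_and_card]
    constructor
    · intro b c h
      have := inj (fun i => (b i).1) (fun i => (c i).1)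
        (fun i => (b i).2) (fun i => (c i).2) h
      funext i
      exact Fin.ext (congrFun this i)
    · simp only [Fintype.card_pi, Fintype.card_fin]
      exact (card_eq_prod hP).symm
  intro g
  obtain ⟨b, hbg⟩ := hbij.2 g
  refine ⟨fun i => (b i).1, ⟨fun i => (hordP' i) ▸ (b i).2, hbg.symm⟩, ?_⟩
  rintro c ⟨hc1, hc2⟩
  have hc1' : ∀ i, c i < addOrderOf (P i) := fun i => (hordP' i) ▸ hc1 i
  exact inj c (fun i => (b i).1) hc1' (fun i => (b i).2) (hc2.symm.trans hbg.symm)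

end key

section nu
variable {G : Type*} [AddCommGroup G] {ι : Type*} [Fintype ι]

lemma nuP_sum_eq {Q : ι → G} (hQ : IsBasis Q) (m : ι → ℕ)
    (hmlt : ∀ i, m i < addOrderOf (Q i)) {p r : ℕ}
    (h : nuP p Q (∑ i, m i • Q i) = (r : ℕ∞)) :
    (∀ i, p ^ r ∣ m i) ∧ ∃ j, ¬ p ^ (r + 1) ∣ m j := by
  set S : Set ℕ := {s : ℕ | ∀ q : ι → ℕ,
    ((∀ i, q i < addOrderOf (Q i)) ∧ (∑ i, m i • Q i) = ∑ i, q i • Q i) → ∀ i, p ^ s ∣ q i}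
    with hS
  have hmem : ∀ s : ℕ, s ∈ S ↔ ∀ i, p ^ s ∣ m i := by
    intro s
    constructor
    · intro hs
      exact hs m ⟨hmlt, rfl⟩
    · intro hdvd q ⟨hqlt, hq⟩ i
      have : q = m := (hQ (∑ i, m i • Q i)).unique ⟨hqlt, hq⟩ ⟨hmlt, rfl⟩
      rw [this]
      exact hdvd i
  constructor
  · by_cases hr0 : r = 0
    · subst hr0; simp
    · by_contra hcon
      have hub : ∀ x ∈ ((↑) : ℕ → ℕ∞) '' S, x ≤ ((r - 1 : ℕ) : ℕ∞) := by
        rintro x ⟨s, hs, rfl⟩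
        have hle : (s : ℕ∞) ≤ (r : ℕ∞) := h ▸ le_sSup ⟨s, hs, rfl⟩
        have hsr : s ≤ r := Nat.cast_le.mp hle
        have hne : s ≠ r := by
          intro e
          exact hcon (e ▸ (hmem s).mp hs)
        exact Nat.cast_le.mpr (by omega)
      have h2 : nuP p Q (∑ i, m i • Q i) ≤ ((r - 1 : ℕ) : ℕ∞) := sSup_le hub
      rw [h] at h2
      have := Nat.cast_le.mp h2
      omega
  · by_contra hcon
    push_neg at hcon
    have hmem' : (r + 1) ∈ S := (hmem (r + 1)).mpr hcon
    have h2 : ((r + 1 : ℕ) : ℕ∞) ≤ nuP p Q (∑ i, m i • Q i) :=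
      le_sSup ⟨r + 1, hmem', rfl⟩
    rw [h] at h2
    have := Nat.cast_le.mp h2
    omega

end nu


/-- The root extraction problem is solvable iff its reduced form is solvable. Here
`r = ν_p K = ν_p (∑ m i • Q i)`, `K = p ^ r • K'`, the canonical coefficients satisfy
`q i = p ^ r * q' i` with `q' i = 0` whenever `q i = 0`, and the reduced multipliers satisfy
`p ^ r * m' i ≡ m i (mod |Q i|)` with `m' i = 0` whenever `m i = 0`. -/
theorem reduced_iff_rep {G : Type*} [AddCommGroup G] [Fintype G]
    {p : ℕ} (hp : p.Prime) (hG : ∀ g : G, ∃ k : ℕ, p ^ k • g = 0)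
    {N : ℕ} (Q : Fin N → G) (hQ : IsBasis Q)
    (hQsorted : Monotone fun i => addOrderOf (Q i))
    (K K' : G) (q q' m m' : Fin N → ℕ)
    (hqlt : ∀ i, q i < addOrderOf (Q i)) (hK : K = ∑ i, q i • Q i)
    (hq'lt : ∀ i, q' i < addOrderOf (Q i)) (hK' : K' = ∑ i, q' i • Q i)
    (hmlt : ∀ i, m i < addOrderOf (Q i)) (hm'lt : ∀ i, m' i < addOrderOf (Q i))
    (r : ℕ) (hr : nuP p Q K = (r : ℕ∞))
    (hred : nuP p Q K = nuP p Q (∑ i, m i • Q i))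
    (hKK' : K = p ^ r • K')
    (hqq' : ∀ i, q i = p ^ r * q' i) (hq0 : ∀ i, q i = 0 → q' i = 0)
    (hmm' : ∀ i, p ^ r * m' i ≡ m i [MOD addOrderOf (Q i)])
    (hm0 : ∀ i, m i = 0 → m' i = 0) :
    (∃ P : Fin N → G, IsBasis P ∧ (∀ i, addOrderOf (P i) = addOrderOf (Q i)) ∧
        K = ∑ i, m i • P i) ↔
    (∃ P : Fin N → G, IsBasis P ∧ (∀ i, addOrderOf (P i) = addOrderOf (Q i)) ∧
        K' = ∑ i, m' i • P i) := by
  constructor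
  · rintro ⟨P, hP, hordP, hKP⟩
    have hsum_eq : nuP p Q (∑ i, m i • Q i) = (r : ℕ∞) := hred.symm.trans hr
    obtain ⟨hdvd, j, hj⟩ := nuP_sum_eq hQ m hmlt hsum_eq
    obtain ⟨e, he⟩ : ∃ e : ℕ, addOrderOf (Q j) = p ^ e := by
      obtain ⟨k, hk⟩ := hG (Q j)
      obtain ⟨e, _, he⟩ := (Nat.dvd_prime_pow hp).mp (addOrderOf_dvd_of_nsmul_eq_zero hk)
      exact ⟨e, he⟩
    have hmj0 : m j ≠ 0 := fun h0 => hj (h0 ▸ dvd_zero _)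
    have hre : r < e := by
      have h1 : p ^ r ≤ m j := Nat.le_of_dvd (Nat.pos_of_ne_zero hmj0) (hdvd j)
      have h2 : m j < p ^ e := he ▸ hmlt j
      exact (pow_lt_pow_iff_right₀ hp.one_lt).mp (lt_of_le_of_lt h1 h2)
    have hpm' : ¬ p ∣ m' j := by
      intro hdiv
      apply hj
      have hd1 : p ^ (r + 1) ∣ p ^ r * m' j := by
        obtain ⟨t, ht⟩ := hdiv
        exact ⟨t, by rw [ht]; ring⟩
      have hd2 : p ^ (r + 1) ∣ addOrderOf (Q j) := he ▸ pow_dvd_pow p (by omega)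
      have hmodr : p ^ r * m' j ≡ m j [MOD p ^ (r + 1)] := (hmm' j).of_dvd hd2
      have hzero : m j ≡ 0 [MOD p ^ (r + 1)] :=
        hmodr.symm.trans (Nat.modEq_zero_iff_dvd.mpr hd1)
      exact Nat.modEq_zero_iff_dvd.mp hzero
    -- a multiplicative inverse u of m' j mod p ^ e
    have hn1 : 1 < p ^ e := Nat.one_lt_pow (by omega) hp.one_lt
    have hcop : Nat.Coprime (m' j) (p ^ e) :=
      Nat.Coprime.pow_right e ((hp.coprime_iff_not_dvd.mpr hpm').symm)
    obtain ⟨u, -, hu⟩ := Nat.exists_mul_mod_eq_one_of_coprime hcop hn1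
    have hu' : m' j * u ≡ 1 [MOD p ^ e] := by
      show (m' j * u) % (p ^ e) = 1 % (p ^ e)
      rw [hu, Nat.mod_eq_of_lt hn1]
    set D : G := K' - ∑ i, m' i • P i with hD
    have hL : p ^ r • (∑ i, m' i • P i) = ∑ i, m i • P i := by
      rw [Finset.smul_sum]
      refine Finset.sum_congr rfl fun i _ => ?_
      rw [smul_smul]
      exact nsmul_congr (addOrderOf_nsmul_eq_zero (P i)) ((hordP i).symm ▸ hmm' i)
    have hDr : p ^ r • D = 0 := by
      rw [hD, smul_sub, hL, ← hKP, ← hKK', sub_self]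
    set d : Fin N → ℕ := bcoord hP D with hd
    have hpd : p ∣ d j := by
      have h0rep : (0 : G) = ∑ i, (p ^ r * d i) • P i := by
        rw [← hDr]
        conv_lhs => rw [bcoord_sum hP D]
        rw [Finset.smul_sum]
        exact Finset.sum_congr rfl fun i _ => by rw [smul_smul]
      have hz := bcoord_eq_mod hP h0rep j
      have hz0 : bcoord hP (0 : G) j = 0 := by
        have h00 : (0 : G) = ∑ i, (0 : ℕ) • P i := by simp
        simpa using bcoord_eq_mod hP h00 j
      have hdv : addOrderOf (P j) ∣ p ^ r * d j :=
        Nat.dvd_of_mod_eq_zero ((hz0 ▸ hz).symm)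
      rw [hordP j, he] at hdv
      have hdv2 : p ^ r * p ∣ p ^ r * d j := by
        refine dvd_trans ?_ hdv
        rw [← pow_succ]
        exact pow_dvd_pow p (by omega)
      exact (Nat.mul_dvd_mul_iff_left (Nat.pow_pos (n := r) hp.pos)).mp hdv2
    have hunit : IsUnit ((1 + u * d j : ℕ) : ZMod (addOrderOf (P j))) := by
      have hndvd : ¬ p ∣ (1 + u * d j) := by
        intro hdv
        have hud : p ∣ u * d j := Dvd.dvd.mul_left hpd u
        have h1 : p ∣ 1 := (Nat.dvd_add_right hud).mp (by rwa [add_comm] at hdv)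
        have := Nat.le_of_dvd one_pos h1
        have := hp.two_le
        omega
      have hcop2 : Nat.Coprime (1 + u * d j) (p ^ e) :=
        Nat.Coprime.pow_right e ((hp.coprime_iff_not_dvd.mpr hndvd).symm)
      haveI : NeZero (p ^ e) := ⟨pow_ne_zero e hp.pos.ne'⟩
      rw [hordP j, he]
      exact (ZMod.isUnit_iff_coprime _ _).mpr hcop2
    have hkill : ∀ s : ℕ, r ≤ s → p ^ s • D = 0 := by
      intro s hs
      have h1 : p ^ s • D = p ^ (s - r) • (p ^ r • D) := by
        rw [smul_smul, ← pow_add, Nat.sub_add_cancel hs]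
      rw [h1, hDr, smul_zero]
    have hpu : ∀ s : ℕ, r ≤ s → p ^ s • (u • D) = 0 := by
      intro s hs
      rw [smul_comm, hkill s hs, smul_zero]
    have hPje : p ^ e • P j = 0 := by
      rw [← he, ← hordP j]
      exact addOrderOf_nsmul_eq_zero _
    have hordD : addOrderOf (P j + u • D) = addOrderOf (P j) := by
      have h1 : p ^ e • (P j + u • D) = 0 := by
        rw [smul_add, hpu e (by omega), add_zero, hPje]
      obtain ⟨s, hsle, hxs⟩ :=
        (Nat.dvd_prime_pow hp).mp (addOrderOf_dvd_of_nsmul_eq_zero h1)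
      have hse : s = e := by
        by_contra hne
        have hsl : s < e := lt_of_le_of_ne hsle hne
        have h2 : p ^ (e - 1) • (P j + u • D) = 0 := by
          apply addOrderOf_dvd_iff_nsmul_eq_zero.mp
          rw [hxs]
          exact pow_dvd_pow p (by omega)
        rw [smul_add, hpu (e - 1) (by omega), add_zero] at h2
        have h3 : addOrderOf (P j) ∣ p ^ (e - 1) :=
          addOrderOf_dvd_of_nsmul_eq_zero h2
        rw [hordP j, he] at h3
        have h4 := Nat.le_of_dvd (pow_pos hp.pos _) h3
        have h5 : p ^ (e - 1) < p ^ e := pow_lt_pow_right₀ hp.one_lt (by omega)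
        omega
      rw [hordP j, he, hxs, hse]
    -- the new basis
    refine ⟨Function.update P j (P j + u • D), isBasis_update hP j D u hordD hunit,
      fun i => ?_, ?_⟩
    · rcases eq_or_ne i j with rfl | hij
      · rw [Function.update_self, hordD, hordP i]
      · rw [Function.update_of_ne hij, hordP i]
    · rw [sum_smul_update P j (u • D) m', smul_smul]
      have hDfix : (m' j * u) • D = D := by
        have hu2 : m' j * u ≡ 1 [MOD p ^ r] :=
          Nat.ModEq.of_dvd (pow_dvd_pow p (by omega)) hu'
        rw [nsmul_congr hDr hu2, one_smul]
      rw [hDfix, hD]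
      abel
  · rintro ⟨P, hP, hordP, hK'P⟩
    refine ⟨P, hP, hordP, ?_⟩
    rw [hKK', hK'P, Finset.smul_sum]
    exact Finset.sum_congr rfl fun i _ => by
      rw [smul_smul]
      exact nsmul_congr (addOrderOf_nsmul_eq_zero (P i)) ((hordP i).symm ▸ hmm' i)
end

section
/- In G = Z/2 x Z/4 x Z/32 x Z/64 with standard basis, there is no basis {P_1,P_2,P_3,P_4} of G (with |P_i| equal to 2, 4, 32, 64 respectively) such that (0,1,2,0) = 1·P_1 + 1·P_2 + 4·P_3 + 4·P_4. -/
/-- In `ℤ/2 × ℤ/4 × ℤ/32 × ℤ/64` there is no basis `{P₁, P₂, P₃, P₄}` (of orders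
`2, 4, 32, 64`) such that `(0,1,2,0) = 1 • P₁ + 1 • P₂ + 4 • P₃ + 4 • P₄`. -/
theorem no_solution_example_two :
    ¬ ∃ P : Fin 4 → ZMod 2 × ZMod 4 × ZMod 32 × ZMod 64, IsBasis P ∧
        addOrderOf (P 0) = 2 ∧ addOrderOf (P 1) = 4 ∧
        addOrderOf (P 2) = 32 ∧ addOrderOf (P 3) = 64 ∧
        ((0,1,2,0) : ZMod 2 × ZMod 4 × ZMod 32 × ZMod 64) =
          1 • P 0 + 1 • P 1 + 4 • P 2 + 4 • P 3 := by
  rintro ⟨P, -, h0, h1, h2, h3, heq⟩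
  have e0 := addOrderOf_nsmul_eq_zero (P 0); rw [h0] at e0
  have e1 := addOrderOf_nsmul_eq_zero (P 1); rw [h1] at e1
  have e2 := addOrderOf_nsmul_eq_zero (P 2); rw [h2] at e2
  have key := congrArg (fun x => (8:ℕ) • x) heq
  simp only [smul_add, smul_smul] at key
  have k0 : (8*1:ℕ) • P 0 = 0 := by
    rw [show (8*1:ℕ) = 4*2 by norm_num, mul_smul, e0, smul_zero]
  have k1 : (8*1:ℕ) • P 1 = 0 := by
    rw [show (8*1:ℕ) = 2*4 by norm_num, mul_smul, e1, smul_zero]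
  have k2 : (8*4:ℕ) • P 2 = 0 := by
    rw [show (8*4:ℕ) = 32 by norm_num, e2]
  rw [k0, k1, k2] at key
  simp only [zero_add, add_zero] at key
  have key3 := congrArg (fun x => x.2.2.1) key
  simp only [Prod.smul_snd, Prod.smul_fst] at key3
  have h16 : ((8:ℕ) • ((2:ZMod 32)) : ZMod 32) = (8*4:ℕ) • (P 3).2.2.1 := key3
  rw [nsmul_eq_mul, nsmul_eq_mul] at h16
  have h32 : ((8*4:ℕ) : ZMod 32) = 0 := by decide
  rw [h32, zero_mul] at h16
  revert h16
  decide
end
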